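/- arXiv:1708.06974 — 4 statements merged into one kernel-verified Lean document; each statement's English description precedes it below -/
import Mathlib

section
/- The set G has cardinality exactly (q^5 − 2q^3 + q^2)/2, and in fact G = G₁ ∪ G₂ ∪ G₃. -/
/-- Tuples `(i, j, k, m, n₁, …, n_{q-2})` of nonnegative integers; the coordinate
`n : Fin (q-2) → ℕ` encodes `n_s` via `n_s = n ⟨s-1, _⟩`, i.e. index `t : Fin (q-2)`
corresponds to the paper's index `s = t + 1`. -/
abbrev GKTup (q : ℕ) := ℕ × ℕ × ℕ × ℕ × (Fin (q - 2) → ℕ)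

/-- `φ(i,j,k,m,n₁,…,n_{q-2}) = i q^3 + j + k q + m (q^2+1) + Σ_{s=1}^{q-2} n_s (s+1) q^2 + 1`. -/
def gkPhi (q : ℕ) (t : GKTup q) : ℕ :=
  t.1 * q ^ 3 + t.2.1 + t.2.2.1 * q + t.2.2.2.1 * (q ^ 2 + 1) +
    (∑ s : Fin (q - 2), t.2.2.2.2 s * ((s.1 + 2) * q ^ 2)) + 1

/-- The weight `i + j + k + m q + Σ_{s=1}^{q-2} n_s ((s+1) q - s)`. -/
def gkWt (q : ℕ) (t : GKTup q) : ℕ :=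
  t.1 + t.2.1 + t.2.2.1 + t.2.2.2.1 * q +
    ∑ s : Fin (q - 2), t.2.2.2.2 s * ((s.1 + 2) * q - (s.1 + 1))

/-- The set `𝒢` of tuples with `j ≤ q - 1` and weight at most `q^2 - 2`. -/
def gkCalG (q : ℕ) : Set (GKTup q) :=
  {t | t.2.1 ≤ q - 1 ∧ gkWt q t ≤ q ^ 2 - 2}

/-- The set of gaps `G = φ(𝒢)`. -/
def gkG (q : ℕ) : Set ℕ := gkPhi q '' gkCalG q

/-- `𝒢₁`: tuples in `𝒢` with `j = 0` and all `n_s = 0`. -/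
def gkCalG1 (q : ℕ) : Set (GKTup q) :=
  {t | t ∈ gkCalG q ∧ t.2.1 = 0 ∧ ∀ s, t.2.2.2.2 s = 0}

/-- `𝒢₂`: tuples in `𝒢` with `1 ≤ j ≤ q - 1`, `k ≤ q - 1`, `j + m ≤ q - 1` and all `n_s = 0`. -/
def gkCalG2 (q : ℕ) : Set (GKTup q) :=
  {t | t ∈ gkCalG q ∧ 1 ≤ t.2.1 ∧ t.2.1 ≤ q - 1 ∧ t.2.2.1 ≤ q - 1 ∧
    t.2.1 + t.2.2.2.1 ≤ q - 1 ∧ ∀ s, t.2.2.2.2 s = 0}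

/-- `𝒢₃`: tuples in `𝒢` with `m = 0`, `k ≤ q - 1`, exactly one `n_s = 1` (the other `n`'s
being zero) and `i + k + (s+1) q ≥ q^2 - 1`. -/
def gkCalG3 (q : ℕ) : Set (GKTup q) :=
  {t | t ∈ gkCalG q ∧ t.2.2.2.1 = 0 ∧ t.2.2.1 ≤ q - 1 ∧
    ∃ s : Fin (q - 2), t.2.2.2.2 s = 1 ∧ (∀ s', s' ≠ s → t.2.2.2.2 s' = 0) ∧
      q ^ 2 - 1 ≤ t.1 + t.2.2.1 + (s.1 + 2) * q}

namespace GKaux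

/-- decrement helper -/
lemma sum_dec {r : ℕ} (n : Fin r → ℕ) (g : Fin r → ℕ) (s : Fin r) (h : 1 ≤ n s) :
    (∑ x, Function.update n s (n s - 1) x * g x) + g s = ∑ x, n x * g x := by
  classical
  obtain ⟨w, hw⟩ : ∃ w, n s = w + 1 := ⟨n s - 1, by omega⟩
  rw [← Finset.sum_erase_add _ _ (Finset.mem_univ s),
      ← Finset.sum_erase_add _ (fun x => n x * g x) (Finset.mem_univ s)]
  have h1 : ∀ x ∈ Finset.univ.erase s,
      Function.update n s (n s - 1) x * g x = n x * g x := by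
    intro x hx
    rw [Function.update_of_ne (Finset.ne_of_mem_erase hx)]
  rw [Finset.sum_congr rfl h1, Function.update_self, hw]
  have h2 : w + 1 - 1 = w := by omega
  rw [h2]
  ring

lemma sum_inc {r : ℕ} (n : Fin r → ℕ) (g : Fin r → ℕ) (s : Fin r) :
    (∑ x, Function.update n s (n s + 1) x * g x) = (∑ x, n x * g x) + g s := by
  classical
  rw [← Finset.sum_erase_add _ _ (Finset.mem_univ s),
      ← Finset.sum_erase_add _ (fun x => n x * g x) (Finset.mem_univ s)]
  have h1 : ∀ x ∈ Finset.univ.erase s,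
      Function.update n s (n s + 1) x * g x = n x * g x := by
    intro x hx
    rw [Function.update_of_ne (Finset.ne_of_mem_erase hx)]
  rw [Finset.sum_congr rfl h1, Function.update_self]
  ring

lemma sum_single {r : ℕ} (g : Fin r → ℕ) (s : Fin r) :
    (∑ x, (Pi.single s 1 : Fin r → ℕ) x * g x) = g s := by
  classical
  have : ∀ x, (Pi.single s 1 : Fin r → ℕ) x * g x = if x = s then g x else 0 := by
    intro x
    by_cases hx : x = s <;> simp [Pi.single_apply, hx]
  simp only [this]
  simp

lemma sum_of_single {r : ℕ} (n : Fin r → ℕ) (g : Fin r → ℕ) (s : Fin r)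
    (h1 : n s = 1) (h0 : ∀ x, x ≠ s → n x = 0) :
    (∑ x, n x * g x) = g s := by
  classical
  rw [Finset.sum_eq_single s (fun b _ hb => by rw [h0 b hb]; ring) (by simp)]
  rw [h1, one_mul]

lemma sum_zero_fun {r : ℕ} (n : Fin r → ℕ) (g : Fin r → ℕ) (h0 : ∀ x, n x = 0) :
    (∑ x, n x * g x) = 0 := by
  apply Finset.sum_eq_zero
  intro x _
  rw [h0 x]; ring

/-- the measure -/
def mu (q : ℕ) (t : GKTup q) : ℕ :=
  (∑ s, t.2.2.2.2 s) * q ^ 4 + gkWt q t * q + t.2.2.2.1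

lemma m_bound {q : ℕ} (hq : 2 ≤ q) {t : GKTup q} (ht : t ∈ gkCalG q) :
    t.2.2.2.1 ≤ q - 1 := by
  have h1 : t.2.2.2.1 * q ≤ gkWt q t := by
    unfold gkWt; omega
  have h2 : gkWt q t ≤ q^2 - 2 := ht.2
  by_contra hc
  have h3 : q ≤ t.2.2.2.1 := by omega
  have h4 : q * q ≤ t.2.2.2.1 * q := Nat.mul_le_mul_right _ h3
  have h5 : q^2 = q * q := sq q
  have h6 : 4 ≤ q * q := Nat.mul_le_mul hq hq
  omega

lemma mu_lt_of_sn {q : ℕ} (hq : 2 ≤ q) {t t' : GKTup q} (ht' : t' ∈ gkCalG q)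
    (hsn : (∑ s, t'.2.2.2.2 s) < ∑ s, t.2.2.2.2 s) : mu q t' < mu q t := by
  have hm : t'.2.2.2.1 ≤ q - 1 := m_bound hq ht'
  have hw : gkWt q t' ≤ q^2 - 2 := ht'.2
  have h1 : gkWt q t' * q ≤ (q^2-2) * q := Nat.mul_le_mul_right _ hw
  have h2 : (∑ s, t'.2.2.2.2 s) + 1 ≤ ∑ s, t.2.2.2.2 s := hsn
  have h3 : ((∑ s, t'.2.2.2.2 s) + 1) * q^4 ≤ (∑ s, t.2.2.2.2 s) * q^4 :=
    Nat.mul_le_mul_right _ h2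
  have h4 : (q^2-2)*q + (q-1) < q^4 := by
    have e0 : q^2*q = q^3 := by ring
    have e3 : (q^2-2)*q = q^3 - 2*q := by rw [Nat.sub_mul, e0]
    have e4 : q^3 ≤ q^4 := Nat.pow_le_pow_right (by omega) (by omega)
    have e5 : 2*q ≤ q^3 := by
      calc 2*q ≤ (q*q) * q := Nat.mul_le_mul_right _ (Nat.le_mul_of_pos_left _ (by omega) |>.trans (Nat.mul_le_mul_right _ hq) |> fun _ => by nlinarith)
      _ = q^3 := by ring
    omega
  have h3' : (∑ s, t'.2.2.2.2 s) * q^4 + q^4 ≤ (∑ s, t.2.2.2.2 s) * q^4 := by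
    rw [add_mul, one_mul] at h3; exact h3
  unfold mu
  omega
lemma mu_lt_of_wt {q : ℕ} (hq : 2 ≤ q) {t t' : GKTup q} (ht' : t' ∈ gkCalG q)
    (hsn : (∑ s, t'.2.2.2.2 s) = ∑ s, t.2.2.2.2 s)
    (hw : gkWt q t' < gkWt q t) : mu q t' < mu q t := by
  have hm : t'.2.2.2.1 ≤ q - 1 := m_bound hq ht'
  have h1 : gkWt q t' * q + q ≤ gkWt q t * q := by
    have h0 : (gkWt q t' + 1) * q ≤ gkWt q t * q := Nat.mul_le_mul_right q hw
    rw [add_mul, one_mul] at h0; exact h0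
  unfold mu
  rw [hsn]
  omega
lemma mu_lt_of_m {q : ℕ} {t t' : GKTup q}
    (hsn : (∑ s, t'.2.2.2.2 s) = ∑ s, t.2.2.2.2 s)
    (hw : gkWt q t' = gkWt q t) (hm : t'.2.2.2.1 < t.2.2.2.1) : mu q t' < mu q t := by
  unfold mu; rw [hsn, hw]; omega

end GKaux

namespace GKaux

lemma sum_dec_one {r : ℕ} (n : Fin r → ℕ) (s : Fin r) (h : 1 ≤ n s) :
    (∑ x, Function.update n s (n s - 1) x) + 1 = ∑ x, n x := by
  simpa [mul_one] using sum_dec n (fun _ => 1) s h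

lemma sum_inc_one {r : ℕ} (n : Fin r → ℕ) (s : Fin r) :
    (∑ x, Function.update n s (n s + 1) x) = (∑ x, n x) + 1 := by
  simpa [mul_one] using sum_inc n (fun _ => 1) s

lemma sum_single_one {r : ℕ} (s : Fin r) :
    (∑ x, (Pi.single s 1 : Fin r → ℕ) x) = 1 := by
  simpa [mul_one] using sum_single (fun _ => (1:ℕ)) s

lemma sum_of_single_one {r : ℕ} (n : Fin r → ℕ) (s : Fin r)
    (h1 : n s = 1) (h0 : ∀ x, x ≠ s → n x = 0) : (∑ x, n x) = 1 := by
  simpa [mul_one] using sum_of_single n (fun _ => (1:ℕ)) s h1 h0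

lemma gk_key {q : ℕ} (hq : 2 ≤ q) :
    ∀ M (t : GKTup q), t ∈ gkCalG q → mu q t ≤ M →
    ∃ t' ∈ gkCalG1 q ∪ gkCalG2 q ∪ gkCalG3 q, gkPhi q t' = gkPhi q t := by
  intro M
  induction M using Nat.strong_induction_on with
  | _ M ih =>
  rintro ⟨i, j, k, m, n⟩ ⟨hj, hwt⟩ hμ
  replace hj : j ≤ q - 1 := hj
  have hq1 : 1 ≤ q := by omega
  have step : ∀ t' : GKTup q, t' ∈ gkCalG q → gkPhi q t' = gkPhi q (i,j,k,m,n) →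
      mu q t' < mu q (i,j,k,m,n) →
      ∃ t'' ∈ gkCalG1 q ∪ gkCalG2 q ∪ gkCalG3 q, gkPhi q t'' = gkPhi q (i,j,k,m,n) := by
    intro t' hmem hphi hlt
    obtain ⟨t'', h1, h2⟩ := ih (mu q t') (lt_of_lt_of_le hlt hμ) t' hmem le_rfl
    exact ⟨t'', h1, h2.trans hphi⟩
  by_cases hn0 : ∀ s : Fin (q-2), n s = 0
  · -- all n_s = 0
    have hW : (∑ s : Fin (q-2), n s * ((s.1+2)*q - (s.1+1))) = 0 := sum_zero_fun n _ hn0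
    have hwt0 : gkWt q (i,j,k,m,n) = i + j + k + m*q := by
      show i + j + k + m*q + _ = _
      rw [hW]
      omega
    by_cases hj0 : j = 0
    · exact ⟨(i,j,k,m,n), Or.inl (Or.inl ⟨⟨hj, hwt⟩, hj0, hn0⟩), rfl⟩
    · by_cases hkq : q ≤ k
      · -- M1 : (i, j-1, k-q, m+1, n)
        obtain ⟨j₀, rfl⟩ : ∃ j₀, j = j₀ + 1 := ⟨j-1, by omega⟩
        obtain ⟨k₀, rfl⟩ : ∃ k₀, k = q + k₀ := ⟨k - q, by omega⟩
        have hwt' : gkWt q (i, j₀, k₀, m+1, n) + 1 = gkWt q (i, j₀+1, q+k₀, m, n) := by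
          show (i + j₀ + k₀ + (m+1)*q + _) + 1 = i + (j₀+1) + (q+k₀) + m*q + _
          rw [hW]; ring
        have hmem : (i, j₀, k₀, m+1, n) ∈ gkCalG q := ⟨show j₀ ≤ q-1 by omega, by omega⟩
        refine step (i, j₀, k₀, m+1, n) hmem ?_ ?_
        · show i*q^3 + j₀ + k₀*q + (m+1)*(q^2+1) + _ + 1
            = i*q^3 + (j₀+1) + (q+k₀)*q + m*(q^2+1) + _ + 1
          ring
        · exact mu_lt_of_wt hq hmem rfl (by omega)
      · by_cases hjm : j + m ≤ q - 1
        · exact ⟨(i,j,k,m,n), Or.inl (Or.inr ⟨⟨hj, hwt⟩, show 1 ≤ j by omega, hj,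
            show k ≤ q - 1 by omega, hjm, hn0⟩), rfl⟩
        · -- 1d : j ≥ 1, k ≤ q-1, j+m ≥ q
          obtain ⟨j₀, rfl⟩ : ∃ j₀, j = j₀ + 1 := ⟨j-1, by omega⟩
          obtain ⟨d, hd1, hdq⟩ : ∃ d, 1 ≤ d ∧ d + (j₀+1) = q := ⟨q-(j₀+1), by omega, by omega⟩
          obtain ⟨e, rfl⟩ : ∃ e, m = d + e := ⟨m - d, by omega⟩
          have hwt' : gkWt q (i, 0, k + d*q + 1, e, n) + j₀ = gkWt q (i, j₀+1, k, d+e, n) := by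
            show (i + 0 + (k + d*q + 1) + e*q + _) + j₀ = i + (j₀+1) + k + (d+e)*q + _
            rw [hW]; ring
          have hmem : (i, 0, k + d*q + 1, e, n) ∈ gkCalG q := ⟨show 0 ≤ q-1 by omega, by omega⟩
          refine step (i, 0, k + d*q + 1, e, n) hmem ?_ ?_
          · show i*q^3 + 0 + (k + d*q + 1)*q + e*(q^2+1) + _ + 1
              = i*q^3 + (j₀+1) + k*q + (d+e)*(q^2+1) + _ + 1
            have hdq' : (d:ℤ) + ((j₀:ℤ)+1) = (q:ℤ) := by exact_mod_cast hdq
            zify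
            linear_combination (-1 : ℤ) * hdq'
          · rcases Nat.eq_zero_or_pos j₀ with h0 | h0
            · subst h0
              exact mu_lt_of_m rfl (by simpa using hwt') (show e < d + e by omega)
            · exact mu_lt_of_wt hq hmem rfl (by omega)
  · -- some n_s ≥ 1
    push_neg at hn0
    obtain ⟨s0, hs0⟩ := hn0
    have hns0 : 1 ≤ n s0 := by omega
    have hs0lt : s0.1 < q - 2 := s0.2
    by_cases hsng : n s0 = 1 ∧ ∀ s', s' ≠ s0 → n s' = 0
    · -- single unit at s0
      obtain ⟨hone, hrest⟩ := hsng
      have hP : (∑ s : Fin (q-2), n s * ((s.1+2)*q^2)) = (s0.1+2)*q^2 :=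
        sum_of_single n _ s0 hone hrest
      have hWn : (∑ s : Fin (q-2), n s * ((s.1+2)*q - (s.1+1))) = (s0.1+2)*q - (s0.1+1) :=
        sum_of_single n _ s0 hone hrest
      have hSn : (∑ s : Fin (q-2), n s) = 1 := sum_of_single_one n s0 hone hrest
      have hA1 : s0.1 + 2 ≤ (s0.1+2)*q := Nat.le_mul_of_pos_right _ (by omega)
      have hwtn : gkWt q (i,j,k,m,n) = i + j + k + m*q + ((s0.1+2)*q - (s0.1+1)) := by
        show i + j + k + m*q + _ = _
        rw [hWn]
      by_cases hm0 : m = 0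
      · subst hm0
        by_cases hik : q^2 - 1 ≤ i + k + (s0.1+2)*q
        · by_cases hk : k ≤ q - 1
          · exact ⟨(i,j,k,0,n), Or.inr ⟨⟨hj, hwt⟩, rfl, hk, s0, hone, hrest, hik⟩, rfl⟩
          · -- A2b : k ≥ q
            obtain ⟨k₀, rfl⟩ : ∃ k₀, k = q + k₀ := ⟨k - q, by omega⟩
            by_cases hc : s0.1 + 2 ≤ q - 2
            · -- shift up
              have hu : s0.1+1 < q-2 := by omega
              have hPu : (∑ x, (Pi.single (⟨s0.1+1, hu⟩ : Fin (q-2)) 1 : Fin (q-2) → ℕ) x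
                  * ((x.1+2)*q^2)) = (s0.1+3)*q^2 := by
                rw [sum_single]
              have hWu : (∑ x, (Pi.single (⟨s0.1+1, hu⟩ : Fin (q-2)) 1 : Fin (q-2) → ℕ) x
                  * ((x.1+2)*q - (x.1+1))) = (s0.1+3)*q - (s0.1+2) := by
                rw [sum_single]
              have hSu : (∑ x, (Pi.single (⟨s0.1+1, hu⟩ : Fin (q-2)) 1 : Fin (q-2) → ℕ) x)
                  = 1 := sum_single_one _
              have e1 : (s0.1+3)*q = (s0.1+2)*q + q := by ring
              have hwt' : gkWt q (i, j, k₀, 0, Pi.single ⟨s0.1+1, hu⟩ 1) + 1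
                  = gkWt q (i, j, q+k₀, 0, n) := by
                show (i + j + k₀ + 0*q + _) + 1 = i + j + (q+k₀) + 0*q + _
                rw [hWu, hWn]
                omega
              have hmem : (i, j, k₀, 0, Pi.single ⟨s0.1+1, hu⟩ 1) ∈ gkCalG q :=
                ⟨show j ≤ q-1 from hj, by omega⟩
              refine step _ hmem ?_ ?_
              · show i*q^3 + j + k₀*q + 0*(q^2+1) + _ + 1
                  = i*q^3 + j + (q+k₀)*q + 0*(q^2+1) + _ + 1
                rw [hPu, hP]
                ring
              · exact mu_lt_of_wt hq hmem (by rw [hSu, hSn]) (by omega)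
            · -- s0.1 + 3 = q
              have hc3 : s0.1 + 3 = q := by omega
              have hwt' : gkWt q (i+1, j, k₀, 0, fun _ => 0) + ((s0.1+2)*q - (s0.1+1)) + q
                  = gkWt q (i, j, q+k₀, 0, n) + 1 := by
                show ((i+1) + j + k₀ + 0*q + _) + _ + q = (i + j + (q+k₀) + 0*q + _) + 1
                rw [sum_zero_fun _ _ (fun _ => rfl), hWn]
                omega
              have hmem : (i+1, j, k₀, 0, fun _ => 0) ∈ gkCalG q := by
                refine ⟨show j ≤ q-1 from hj, ?_⟩
                omega
              refine step _ hmem ?_ ?_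
              · show (i+1)*q^3 + j + k₀*q + 0*(q^2+1) + _ + 1
                  = i*q^3 + j + (q+k₀)*q + 0*(q^2+1) + _ + 1
                rw [sum_zero_fun _ _ (fun _ => rfl), hP]
                have hc3' : (s0.1:ℤ) + 3 = (q:ℤ) := by exact_mod_cast hc3
                zify
                linear_combination (-(q:ℤ)^2) * hc3'
              · apply mu_lt_of_sn hq hmem
                show (∑ _x : Fin (q-2), 0) < _
                rw [Finset.sum_const_zero, hSn]
                omega
        · -- A2c : i + k + (s0.1+2)q ≤ q^2-2
          push_neg at hik
          have hik' : i + k + (s0.1+2)*q ≤ q^2 - 2 := by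
            have h4 : 4 ≤ q*q := Nat.mul_le_mul hq hq
            have h5 : q^2 = q*q := sq q
            omega
          by_cases hja : j ≤ s0.1 + 2
          · -- direct to 𝒢1
            obtain ⟨b, hb⟩ : ∃ b, s0.1+2 = j + b := ⟨s0.1+2-j, by omega⟩
            refine ⟨(i, 0, k + b*q, j, fun _ => 0), Or.inl (Or.inl ⟨⟨show (0:ℕ) ≤ q-1 by omega, ?_⟩, rfl, fun _ => rfl⟩), ?_⟩
            · show i + 0 + (k + b*q) + j*q + _ ≤ q^2 - 2
              rw [sum_zero_fun _ _ (fun _ => rfl)]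
              have e1 : (j+b)*q = j*q + b*q := by ring
              rw [hb] at hik'
              omega
            · show i*q^3 + 0 + (k + b*q)*q + j*(q^2+1) + _ + 1
                = i*q^3 + j + k*q + 0*(q^2+1) + _ + 1
              rw [sum_zero_fun _ _ (fun _ => rfl), hP, hb]
              ring
          · -- j ≥ s0.1+3 : (i, j - (s0.1+1), k+q, s0.1+1, 0)
            obtain ⟨j₂, rfl⟩ : ∃ j₂, j = (s0.1+1) + j₂ := ⟨j - (s0.1+1), by omega⟩
            have hwt' : gkWt q (i, j₂, k + q, s0.1+1, fun _ => 0)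
                = gkWt q (i, (s0.1+1)+j₂, k, 0, n) := by
              show i + j₂ + (k+q) + (s0.1+1)*q + _ = i + ((s0.1+1)+j₂) + k + 0*q + _
              rw [sum_zero_fun _ _ (fun _ => rfl), hWn]
              have e1 : (s0.1+2)*q = (s0.1+1)*q + q := by ring
              omega
            have hmem : (i, j₂, k + q, s0.1+1, fun _ => 0) ∈ gkCalG q := ⟨show j₂ ≤ q-1 by omega, by omega⟩
            refine step _ hmem ?_ ?_
            · show i*q^3 + j₂ + (k+q)*q + (s0.1+1)*(q^2+1) + _ + 1
                = i*q^3 + ((s0.1+1)+j₂) + k*q + 0*(q^2+1) + _ + 1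
              rw [sum_zero_fun _ _ (fun _ => rfl), hP]
              ring
            · apply mu_lt_of_sn hq hmem
              show (∑ _x : Fin (q-2), 0) < _
              rw [Finset.sum_const_zero, hSn]
              omega
      · -- A1 : m ≥ 1
        obtain ⟨m₀, rfl⟩ : ∃ m₀, m = m₀ + 1 := ⟨m-1, by omega⟩
        by_cases hc : s0.1 + 2 ≤ q - 2
        · -- target index u = s0+1
          by_cases hjq : j ≤ q - 2
          · have hu : s0.1+1 < q-2 := by omega
            have hPu : (∑ x, (Pi.single (⟨s0.1+1, hu⟩ : Fin (q-2)) 1 : Fin (q-2) → ℕ) x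
                * ((x.1+2)*q^2)) = (s0.1+3)*q^2 := by
              rw [sum_single]
            have hWu : (∑ x, (Pi.single (⟨s0.1+1, hu⟩ : Fin (q-2)) 1 : Fin (q-2) → ℕ) x
                * ((x.1+2)*q - (x.1+1))) = (s0.1+3)*q - (s0.1+2) := by
              rw [sum_single]
            have hSu : (∑ x, (Pi.single (⟨s0.1+1, hu⟩ : Fin (q-2)) 1 : Fin (q-2) → ℕ) x)
                = 1 := sum_single_one _
            have e1 : (s0.1+3)*q = (s0.1+2)*q + q := by ring
            have e2 : (m₀+1)*q = m₀*q + q := by ring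
            have hwt' : gkWt q (i, j+1, k, m₀, Pi.single ⟨s0.1+1, hu⟩ 1)
                = gkWt q (i, j, k, m₀+1, n) := by
              show i + (j+1) + k + m₀*q + _ = i + j + k + (m₀+1)*q + _
              rw [hWu, hWn]
              omega
            have hmem : (i, j+1, k, m₀, Pi.single ⟨s0.1+1, hu⟩ 1) ∈ gkCalG q :=
              ⟨show j+1 ≤ q-1 by omega, by omega⟩
            refine step _ hmem ?_ ?_
            · show i*q^3 + (j+1) + k*q + m₀*(q^2+1) + _ + 1
                = i*q^3 + j + k*q + (m₀+1)*(q^2+1) + _ + 1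
              rw [hPu, hP]
              ring
            · exact mu_lt_of_m (by rw [hSu, hSn]) hwt' (show m₀ < m₀ + 1 by omega)
          · -- j = q-1
            have hjq1 : j + 1 = q := by omega
            have hu : s0.1+1 < q-2 := by omega
            have hPu : (∑ x, (Pi.single (⟨s0.1+1, hu⟩ : Fin (q-2)) 1 : Fin (q-2) → ℕ) x
                * ((x.1+2)*q^2)) = (s0.1+3)*q^2 := by
              rw [sum_single]
            have hWu : (∑ x, (Pi.single (⟨s0.1+1, hu⟩ : Fin (q-2)) 1 : Fin (q-2) → ℕ) x
                * ((x.1+2)*q - (x.1+1))) = (s0.1+3)*q - (s0.1+2) := by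
              rw [sum_single]
            have hSu : (∑ x, (Pi.single (⟨s0.1+1, hu⟩ : Fin (q-2)) 1 : Fin (q-2) → ℕ) x)
                = 1 := sum_single_one _
            have e1 : (s0.1+3)*q = (s0.1+2)*q + q := by ring
            have e2 : (m₀+1)*q = m₀*q + q := by ring
            have hwt' : gkWt q (i, 0, k+1, m₀, Pi.single ⟨s0.1+1, hu⟩ 1) + (q-1)
                = gkWt q (i, j, k, m₀+1, n) := by
              show (i + 0 + (k+1) + m₀*q + _) + (q-1) = i + j + k + (m₀+1)*q + _
              rw [hWu, hWn]
              omega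
            have hmem : (i, 0, k+1, m₀, Pi.single ⟨s0.1+1, hu⟩ 1) ∈ gkCalG q :=
              ⟨show 0 ≤ q-1 by omega, by omega⟩
            refine step _ hmem ?_ ?_
            · show i*q^3 + 0 + (k+1)*q + m₀*(q^2+1) + _ + 1
                = i*q^3 + j + k*q + (m₀+1)*(q^2+1) + _ + 1
              rw [hPu, hP]
              have hjq1' : (j:ℤ) + 1 = (q:ℤ) := by exact_mod_cast hjq1
              zify
              linear_combination (-1:ℤ) * hjq1'
            · exact mu_lt_of_wt hq hmem (by rw [hSu, hSn]) (by omega)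
        · -- c = q-1 : s0.1+3 = q
          have hc3 : s0.1 + 3 = q := by omega
          have hc3' : (s0.1:ℤ) + 3 = (q:ℤ) := by exact_mod_cast hc3
          by_cases hjq : j ≤ q - 2
          · have hwt' : gkWt q (i+1, j+1, k, m₀, fun _ => 0) + ((s0.1+2)*q - (s0.1+1)) + q
                = gkWt q (i, j, k, m₀+1, n) + 2 := by
              show ((i+1) + (j+1) + k + m₀*q + _) + _ + q = (i + j + k + (m₀+1)*q + _) + 2
              rw [sum_zero_fun _ _ (fun _ => rfl), hWn]
              have e2 : (m₀+1)*q = m₀*q + q := by ring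
              omega
            have hmem : (i+1, j+1, k, m₀, fun _ => 0) ∈ gkCalG q := by
              refine ⟨show j+1 ≤ q-1 by omega, ?_⟩
              have hA2 : q ≤ (s0.1+2)*q := Nat.le_mul_of_pos_left _ (by omega)
              omega
            refine step _ hmem ?_ ?_
            · show (i+1)*q^3 + (j+1) + k*q + m₀*(q^2+1) + _ + 1
                = i*q^3 + j + k*q + (m₀+1)*(q^2+1) + _ + 1
              rw [sum_zero_fun _ _ (fun _ => rfl), hP]
              zify
              linear_combination (-(q:ℤ)^2) * hc3'
            · apply mu_lt_of_sn hq hmem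
              show (∑ _x : Fin (q-2), 0) < _
              rw [Finset.sum_const_zero, hSn]
              omega
          · have hjq1 : j + 1 = q := by omega
            have hjq1' : (j:ℤ) + 1 = (q:ℤ) := by exact_mod_cast hjq1
            have hwt' : gkWt q (i+1, 0, k+1, m₀, fun _ => 0) + ((s0.1+2)*q - (s0.1+1)) + (q-1) + q
                = gkWt q (i, j, k, m₀+1, n) + 2 := by
              show ((i+1) + 0 + (k+1) + m₀*q + _) + _ + (q-1) + q = (i + j + k + (m₀+1)*q + _) + 2
              rw [sum_zero_fun _ _ (fun _ => rfl), hWn]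
              have e2 : (m₀+1)*q = m₀*q + q := by ring
              omega
            have hmem : (i+1, 0, k+1, m₀, fun _ => 0) ∈ gkCalG q := by
              refine ⟨show 0 ≤ q-1 by omega, ?_⟩
              have hA2 : q ≤ (s0.1+2)*q := Nat.le_mul_of_pos_left _ (by omega)
              omega
            refine step _ hmem ?_ ?_
            · show (i+1)*q^3 + 0 + (k+1)*q + m₀*(q^2+1) + _ + 1
                = i*q^3 + j + k*q + (m₀+1)*(q^2+1) + _ + 1
              rw [sum_zero_fun _ _ (fun _ => rfl), hP]
              zify
              linear_combination (-(q:ℤ)^2) * hc3' + (-1:ℤ) * hjq1'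
            · apply mu_lt_of_sn hq hmem
              show (∑ _x : Fin (q-2), 0) < _
              rw [Finset.sum_const_zero, hSn]
              omega
    · -- at least two units among the n's
      have hex : ∃ s1, 1 ≤ Function.update n s0 (n s0 - 1) s1 := by
        by_cases h2 : n s0 = 1
        · have h3 : ¬ ∀ s', s' ≠ s0 → n s' = 0 := fun hall => hsng ⟨h2, hall⟩
          push_neg at h3
          obtain ⟨s', hne, hnz⟩ := h3
          exact ⟨s', by rw [Function.update_of_ne hne]; omega⟩
        · exact ⟨s0, by rw [Function.update_self]; omega⟩
      obtain ⟨s1, hs1⟩ := hex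
      have hs1lt : s1.1 < q - 2 := s1.2
      set n₁ : Fin (q-2) → ℕ := Function.update n s0 (n s0 - 1) with hn1
      set n₂ : Fin (q-2) → ℕ := Function.update n₁ s1 (n₁ s1 - 1) with hn2
      have hP1 : (∑ x, n₁ x * ((x.1+2)*q^2)) + (s0.1+2)*q^2
          = ∑ x, n x * ((x.1+2)*q^2) := sum_dec n _ s0 hns0
      have hP2 : (∑ x, n₂ x * ((x.1+2)*q^2)) + (s1.1+2)*q^2
          = ∑ x, n₁ x * ((x.1+2)*q^2) := sum_dec n₁ _ s1 hs1
      have hW1 : (∑ x, n₁ x * ((x.1+2)*q - (x.1+1))) + ((s0.1+2)*q - (s0.1+1))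
          = ∑ x, n x * ((x.1+2)*q - (x.1+1)) := sum_dec n _ s0 hns0
      have hW2 : (∑ x, n₂ x * ((x.1+2)*q - (x.1+1))) + ((s1.1+2)*q - (s1.1+1))
          = ∑ x, n₁ x * ((x.1+2)*q - (x.1+1)) := sum_dec n₁ _ s1 hs1
      have hS1 : (∑ x, n₁ x) + 1 = ∑ x, n x := sum_dec_one n s0 hns0
      have hS2 : (∑ x, n₂ x) + 1 = ∑ x, n₁ x := sum_dec_one n₁ s1 hs1
      have hA : s0.1 + 2 ≤ (s0.1+2)*q := Nat.le_mul_of_pos_right _ (by omega)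
      have hB : s1.1 + 2 ≤ (s1.1+2)*q := Nat.le_mul_of_pos_right _ (by omega)
      have hqq : q ≤ q*q := Nat.le_mul_of_pos_left _ (by omega)
      have h2q : 2*q ≤ q*q := Nat.mul_le_mul_right q hq
      have hWid : gkWt q (i,j,k,m,n)
          = i + j + k + m*q + (∑ x, n x * ((x.1+2)*q - (x.1+1))) := rfl
      rcases lt_trichotomy (s0.1 + s1.1 + 4) q with hcmp | hcmp | hcmp
      · -- B1 : a+b ≤ q-1, combine into one n
        have hu : s0.1+s1.1+2 < q-2 := by omega
        have hP3 : (∑ x, Function.update n₂ ⟨s0.1+s1.1+2, hu⟩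
              (n₂ ⟨s0.1+s1.1+2, hu⟩ + 1) x * ((x.1+2)*q^2))
            = (∑ x, n₂ x * ((x.1+2)*q^2)) + (s0.1+s1.1+2+2)*q^2 := sum_inc n₂ _ _
        have hW3 : (∑ x, Function.update n₂ ⟨s0.1+s1.1+2, hu⟩
              (n₂ ⟨s0.1+s1.1+2, hu⟩ + 1) x * ((x.1+2)*q - (x.1+1)))
            = (∑ x, n₂ x * ((x.1+2)*q - (x.1+1))) + ((s0.1+s1.1+2+2)*q - (s0.1+s1.1+2+1)) :=
          sum_inc n₂ _ _
        have hS3 : (∑ x, Function.update n₂ ⟨s0.1+s1.1+2, hu⟩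
              (n₂ ⟨s0.1+s1.1+2, hu⟩ + 1) x)
            = (∑ x, n₂ x) + 1 := sum_inc_one n₂ _
        have e1 : (s0.1+s1.1+2+2)*q = (s0.1+2)*q + (s1.1+2)*q := by ring
        have e2 : (s0.1+s1.1+2+2)*q^2 = (s0.1+2)*q^2 + (s1.1+2)*q^2 := by ring
        have hwt' : gkWt q (i, j, k, m, Function.update n₂ ⟨s0.1+s1.1+2, hu⟩
              (n₂ ⟨s0.1+s1.1+2, hu⟩ + 1)) + 1 = gkWt q (i, j, k, m, n) := by
          have hl : gkWt q (i, j, k, m, Function.update n₂ ⟨s0.1+s1.1+2, hu⟩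
              (n₂ ⟨s0.1+s1.1+2, hu⟩ + 1)) = i + j + k + m*q
              + (∑ x, Function.update n₂ ⟨s0.1+s1.1+2, hu⟩
                  (n₂ ⟨s0.1+s1.1+2, hu⟩ + 1) x * ((x.1+2)*q - (x.1+1))) := rfl
          rw [hl, hWid, hW3]
          omega
        have hmem : (i, j, k, m, Function.update n₂ ⟨s0.1+s1.1+2, hu⟩
              (n₂ ⟨s0.1+s1.1+2, hu⟩ + 1)) ∈ gkCalG q := ⟨show j ≤ q-1 from hj, by omega⟩
        refine step _ hmem ?_ ?_
        · have hl : gkPhi q (i, j, k, m, Function.update n₂ ⟨s0.1+s1.1+2, hu⟩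
              (n₂ ⟨s0.1+s1.1+2, hu⟩ + 1)) = i*q^3 + j + k*q + m*(q^2+1)
              + (∑ x, Function.update n₂ ⟨s0.1+s1.1+2, hu⟩
                  (n₂ ⟨s0.1+s1.1+2, hu⟩ + 1) x * ((x.1+2)*q^2)) + 1 := rfl
          have hr : gkPhi q (i, j, k, m, n) = i*q^3 + j + k*q + m*(q^2+1)
              + (∑ x, n x * ((x.1+2)*q^2)) + 1 := rfl
          rw [hl, hr, hP3]
          omega
        · exact mu_lt_of_sn hq hmem (show (∑ x, Function.update n₂ ⟨s0.1+s1.1+2, hu⟩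
              (n₂ ⟨s0.1+s1.1+2, hu⟩ + 1) x) < ∑ x, n x by omega)
      · -- B2 : a+b = q
        have key : q^3 = (s0.1+2)*q^2 + (s1.1+2)*q^2 := by
          have he' : (s0.1:ℤ) + s1.1 + 4 = (q:ℤ) := by exact_mod_cast hcmp
          zify
          linear_combination (-(q:ℤ)^2) * he'
        have e3 : (i+1)*q^3 = i*q^3 + q^3 := by ring
        have hwt' : gkWt q (i+1, j, k, m, n₂) + 1 ≤ gkWt q (i, j, k, m, n) := by
          have hl : gkWt q (i+1, j, k, m, n₂) = (i+1) + j + k + m*q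
              + (∑ x, n₂ x * ((x.1+2)*q - (x.1+1))) := rfl
          rw [hl, hWid]
          omega
        have hmem : (i+1, j, k, m, n₂) ∈ gkCalG q := ⟨show j ≤ q-1 from hj, by omega⟩
        refine step _ hmem ?_ ?_
        · have hl : gkPhi q (i+1, j, k, m, n₂) = (i+1)*q^3 + j + k*q + m*(q^2+1)
              + (∑ x, n₂ x * ((x.1+2)*q^2)) + 1 := rfl
          have hr : gkPhi q (i, j, k, m, n) = i*q^3 + j + k*q + m*(q^2+1)
              + (∑ x, n x * ((x.1+2)*q^2)) + 1 := rfl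
          rw [hl, hr]
          omega
        · exact mu_lt_of_sn hq hmem (show (∑ x, n₂ x) < ∑ x, n x by omega)
      · -- a+b ≥ q+1
        have eAB : (s0.1+2)*q + (s1.1+2)*q = (s0.1+s1.1+4)*q := by ring
        rcases Nat.lt_or_ge q (s0.1 + s1.1 + 3) with hge | heq1
        · -- B5 : a+b ≥ q+2
          obtain ⟨v, hv⟩ : ∃ v, s0.1+s1.1+2 = v + q := ⟨s0.1+s1.1+2-q, by omega⟩
          have hu : v < q-2 := by omega
          have hP3 : (∑ x, Function.update n₂ ⟨v, hu⟩ (n₂ ⟨v, hu⟩ + 1) x * ((x.1+2)*q^2))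
              = (∑ x, n₂ x * ((x.1+2)*q^2)) + (v+2)*q^2 := sum_inc n₂ _ _
          have hW3 : (∑ x, Function.update n₂ ⟨v, hu⟩ (n₂ ⟨v, hu⟩ + 1) x
                * ((x.1+2)*q - (x.1+1)))
              = (∑ x, n₂ x * ((x.1+2)*q - (x.1+1))) + ((v+2)*q - (v+1)) := sum_inc n₂ _ _
          have hS3 : (∑ x, Function.update n₂ ⟨v, hu⟩ (n₂ ⟨v, hu⟩ + 1) x)
              = (∑ x, n₂ x) + 1 := sum_inc_one n₂ _
          have key : q^3 + (v+2)*q^2 = (s0.1+2)*q^2 + (s1.1+2)*q^2 := by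
            have hv' : (s0.1:ℤ) + s1.1 + 2 = (v:ℤ) + q := by exact_mod_cast hv
            zify
            linear_combination (-(q:ℤ)^2) * hv'
          have eC : (s0.1+s1.1+4)*q = (v+2)*q + q*q := by
            have : s0.1+s1.1+4 = (v+2) + q := by omega
            rw [this, Nat.add_mul]
          have eD : v + 2 ≤ (v+2)*q := Nat.le_mul_of_pos_right _ (by omega)
          have e3 : (i+1)*q^3 = i*q^3 + q^3 := by ring
          have hwt' : gkWt q (i+1, j, k, m, Function.update n₂ ⟨v, hu⟩ (n₂ ⟨v, hu⟩ + 1)) + 1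
              ≤ gkWt q (i, j, k, m, n) := by
            have hl : gkWt q (i+1, j, k, m, Function.update n₂ ⟨v, hu⟩ (n₂ ⟨v, hu⟩ + 1))
                = (i+1) + j + k + m*q + (∑ x, Function.update n₂ ⟨v, hu⟩
                    (n₂ ⟨v, hu⟩ + 1) x * ((x.1+2)*q - (x.1+1))) := rfl
            rw [hl, hWid, hW3]
            omega
          have hmem : (i+1, j, k, m, Function.update n₂ ⟨v, hu⟩ (n₂ ⟨v, hu⟩ + 1)) ∈ gkCalG q :=
            ⟨show j ≤ q-1 from hj, by omega⟩
          refine step _ hmem ?_ ?_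
          · have hl : gkPhi q (i+1, j, k, m, Function.update n₂ ⟨v, hu⟩ (n₂ ⟨v, hu⟩ + 1))
                = (i+1)*q^3 + j + k*q + m*(q^2+1) + (∑ x, Function.update n₂ ⟨v, hu⟩
                    (n₂ ⟨v, hu⟩ + 1) x * ((x.1+2)*q^2)) + 1 := rfl
            have hr : gkPhi q (i, j, k, m, n) = i*q^3 + j + k*q + m*(q^2+1)
                + (∑ x, n x * ((x.1+2)*q^2)) + 1 := rfl
            rw [hl, hr, hP3]
            omega
          · exact mu_lt_of_sn hq hmem (show (∑ x, Function.update n₂ ⟨v, hu⟩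
                (n₂ ⟨v, hu⟩ + 1) x) < ∑ x, n x by omega)
        · -- B3/B4 : a+b = q+1
          have heq : s0.1 + s1.1 + 4 = q + 1 := by omega
          have key : q^3 + q^2 = (s0.1+2)*q^2 + (s1.1+2)*q^2 := by
            have he' : (s0.1:ℤ) + s1.1 + 4 = (q:ℤ) + 1 := by exact_mod_cast heq
            zify
            linear_combination (-(q:ℤ)^2) * he'
          have eC : (s0.1+s1.1+4)*q = q*q + q := by
            rw [heq, Nat.add_mul]
            omega
          have e3 : (i+1)*q^3 = i*q^3 + q^3 := by ring
          rcases Nat.eq_zero_or_pos j with hj0 | hj0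
          · -- B4
            subst hj0
            have e4 : (k+q)*q = k*q + q*q := by ring
            have hwt' : gkWt q (i+1, 0, k+q, m, n₂) + 1 ≤ gkWt q (i, 0, k, m, n) := by
              have hl : gkWt q (i+1, 0, k+q, m, n₂) = (i+1) + 0 + (k+q) + m*q
                  + (∑ x, n₂ x * ((x.1+2)*q - (x.1+1))) := rfl
              rw [hl, hWid]
              omega
            have hmem : (i+1, 0, k+q, m, n₂) ∈ gkCalG q := ⟨show 0 ≤ q-1 by omega, by omega⟩
            refine step _ hmem ?_ ?_
            · have hl : gkPhi q (i+1, 0, k+q, m, n₂) = (i+1)*q^3 + 0 + (k+q)*q + m*(q^2+1)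
                  + (∑ x, n₂ x * ((x.1+2)*q^2)) + 1 := rfl
              have hr : gkPhi q (i, 0, k, m, n) = i*q^3 + 0 + k*q + m*(q^2+1)
                  + (∑ x, n x * ((x.1+2)*q^2)) + 1 := rfl
              rw [hl, hr]
              have e5 : q^2 = q*q := sq q
              omega
            · exact mu_lt_of_sn hq hmem (show (∑ x, n₂ x) < ∑ x, n x by omega)
          · -- B3
            obtain ⟨j₀, rfl⟩ : ∃ j₀, j = j₀ + 1 := ⟨j-1, by omega⟩
            have e4 : (m+1)*q = m*q + q := by ring
            have e5 : (m+1)*(q^2+1) = m*(q^2+1) + q^2 + 1 := by ring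
            have hwt' : gkWt q (i+1, j₀, k, m+1, n₂) + 1 ≤ gkWt q (i, j₀+1, k, m, n) := by
              have hl : gkWt q (i+1, j₀, k, m+1, n₂) = (i+1) + j₀ + k + (m+1)*q
                  + (∑ x, n₂ x * ((x.1+2)*q - (x.1+1))) := rfl
              rw [hl, hWid]
              omega
            have hmem : (i+1, j₀, k, m+1, n₂) ∈ gkCalG q := ⟨show j₀ ≤ q-1 by omega, by omega⟩
            refine step _ hmem ?_ ?_
            · have hl : gkPhi q (i+1, j₀, k, m+1, n₂) = (i+1)*q^3 + j₀ + k*q + (m+1)*(q^2+1)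
                  + (∑ x, n₂ x * ((x.1+2)*q^2)) + 1 := rfl
              have hr : gkPhi q (i, j₀+1, k, m, n) = i*q^3 + (j₀+1) + k*q + m*(q^2+1)
                  + (∑ x, n x * ((x.1+2)*q^2)) + 1 := rfl
              rw [hl, hr]
              omega
            · exact mu_lt_of_sn hq hmem (show (∑ x, n₂ x) < ∑ x, n x by omega)

end GKaux

namespace GKaux

lemma tri_mul_two : ∀ N : ℕ, (∑ k ∈ Finset.range N, (N - k)) * 2 = N*(N+1) := by
  intro N
  induction N with
  | zero => simp
  | succ M ih =>
    rw [Finset.sum_range_succ]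
    have h1 : ∀ k ∈ Finset.range M, (M + 1 - k) = (M - k) + 1 := by
      intro k hk
      have := Finset.mem_range.mp hk
      omega
    rw [Finset.sum_congr rfl h1, Finset.sum_add_distrib, Finset.sum_const, Finset.card_range]
    have h3 : M + 1 - M = 1 := by omega
    rw [h3]
    simp only [smul_eq_mul, mul_one]
    nlinarith [ih]

lemma zsum_poly (A B C D : ℤ) : ∀ n : ℕ,
    (∑ x ∈ Finset.range n, (A + B*(x:ℤ) + C*(x:ℤ)^2 + D*(x:ℤ)^3)) * 12
    = 12*(n:ℤ)*A + 6*B*((n:ℤ)*((n:ℤ)-1)) + 2*C*((n:ℤ)*((n:ℤ)-1)*(2*(n:ℤ)-1))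
      + 3*D*((n:ℤ)^2*((n:ℤ)-1)^2) := by
  intro n
  induction n with
  | zero => simp
  | succ M ih =>
    rw [Finset.sum_range_succ, add_mul, ih]
    push_cast
    ring

lemma split_unique {Q a r a' r' : ℕ} (hr : r < Q) (hr' : r' < Q)
    (h : a*Q + r = a'*Q + r') : a = a' ∧ r = r' := by
  have h0 : 0 < Q := by omega
  have h1 : (a*Q + r) % Q = r % Q := by rw [mul_comm]; exact Nat.mul_add_mod Q a r
  have h2 : (a'*Q + r') % Q = r' % Q := by rw [mul_comm]; exact Nat.mul_add_mod Q a' r'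
  rw [Nat.mod_eq_of_lt hr] at h1
  rw [Nat.mod_eq_of_lt hr'] at h2
  have hrr : r = r' := by rw [← h1, ← h2, h]
  have hmul : a * Q = a' * Q := by omega
  exact ⟨Nat.eq_of_mul_eq_mul_right h0 hmul, hrr⟩

def pt1 (q : ℕ) : Finset ((_ : ℕ) × (_ : ℕ) × ℕ) :=
  (Finset.range q).sigma fun m' => (Finset.range ((m'+1)*q - 1)).sigma fun k =>
    Finset.range ((m'+1)*q - 1 - k)

def em1 (q : ℕ) (p : (_ : ℕ) × (_ : ℕ) × ℕ) : ℕ :=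
  p.2.2*q^3 + p.2.1*q + (q-1-p.1)*(q^2+1) + 1

lemma mem_pt1 {q m' k i : ℕ} :
    (⟨m', k, i⟩ : (_ : ℕ) × (_ : ℕ) × ℕ) ∈ pt1 q
    ↔ m' < q ∧ k < (m'+1)*q - 1 ∧ i < (m'+1)*q - 1 - k := by
  simp [pt1, Finset.mem_sigma, Finset.mem_range]

lemma im1 {q : ℕ} (hq : 2 ≤ q) :
    gkPhi q '' gkCalG1 q = ↑((pt1 q).image (em1 q)) := by
  have hq2 : q^2 = q*q := sq q
  have h4q : 4 ≤ q*q := Nat.mul_le_mul hq hq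
  ext v
  simp only [Finset.coe_image, Set.mem_image, Finset.mem_coe]
  constructor
  · rintro ⟨⟨i,j,k,m,n⟩, ⟨⟨hjb,hwt⟩, hj0, hn0⟩, rfl⟩
    replace hj0 : j = 0 := hj0
    subst hj0
    have hWid : gkWt q (i,0,k,m,n)
        = i + 0 + k + m*q + (∑ x, n x * ((x.1+2)*q - (x.1+1))) := rfl
    rw [hWid, sum_zero_fun n _ hn0] at hwt
    have hm : m ≤ q - 1 := by
      by_contra hc
      have h3 : q ≤ m := by omega
      have h4 : q * q ≤ m * q := Nat.mul_le_mul_right _ h3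
      omega
    have e1 : (q-1-m+1)*q + m*q = q*q := by
      rw [← Nat.add_mul]
      congr 1
      omega
    refine ⟨⟨q-1-m, k, i⟩, mem_pt1.mpr ⟨by omega, by omega, by omega⟩, ?_⟩
    have e3 : q-1-(q-1-m) = m := by omega
    show i*q^3 + k*q + (q-1-(q-1-m))*(q^2+1) + 1 = _
    rw [e3]
    have hPid : gkPhi q (i,0,k,m,n)
        = i*q^3 + 0 + k*q + m*(q^2+1) + (∑ x, n x * ((x.1+2)*q^2)) + 1 := rfl
    rw [hPid, sum_zero_fun n _ hn0]
    omega
  · rintro ⟨⟨m',k,i⟩, hp, rfl⟩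
    obtain ⟨h1, h2, h3⟩ := mem_pt1.mp hp
    have e1 : (q-1-m')*q + (m'+1)*q = q*q := by
      rw [← Nat.add_mul]
      congr 1
      omega
    refine ⟨(i, 0, k, q-1-m', fun _ => 0),
      ⟨⟨show (0:ℕ) ≤ q-1 by omega, ?_⟩, rfl, fun _ => rfl⟩, ?_⟩
    · have hWid : gkWt q (i,0,k,q-1-m',fun _ => 0)
          = i + 0 + k + (q-1-m')*q
            + (∑ x : Fin (q-2), (fun _ => 0) x * ((x.1+2)*q - (x.1+1))) := rfl
      rw [hWid, sum_zero_fun _ _ (fun _ => rfl)]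
      omega
    · have hPid : gkPhi q (i,0,k,q-1-m',fun _ => 0)
          = i*q^3 + 0 + k*q + (q-1-m')*(q^2+1)
            + (∑ x : Fin (q-2), (fun _ => 0) x * ((x.1+2)*q^2)) + 1 := rfl
      rw [hPid, sum_zero_fun _ _ (fun _ => rfl)]
      show _ = i*q^3 + k*q + (q-1-m')*(q^2+1) + 1
      omega

lemma inj1 {q : ℕ} (hq : 2 ≤ q) : Set.InjOn (em1 q) ↑(pt1 q) := by
  have hq2 : q^2 = q*q := sq q
  rintro ⟨m1,k1,i1⟩ hp ⟨m2,k2,i2⟩ hp' h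
  obtain ⟨a1, a2, a3⟩ := mem_pt1.mp (Finset.mem_coe.mp hp)
  obtain ⟨b1, b2, b3⟩ := mem_pt1.mp (Finset.mem_coe.mp hp')
  have rearr : ∀ a b c : ℕ, a*q^3 + b*q + c*(q^2+1) + 1 = (a*q^2 + (b + c*q))*q + c + 1 := by
    intros; ring
  have h' : (i1*q^2 + (k1 + (q-1-m1)*q))*q + (q-1-m1)
      = (i2*q^2 + (k2 + (q-1-m2)*q))*q + (q-1-m2) := by
    have h1 : em1 q ⟨m1,k1,i1⟩ = (i1*q^2 + (k1 + (q-1-m1)*q))*q + (q-1-m1) + 1 := rearr ..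
    have h2 : em1 q ⟨m2,k2,i2⟩ = (i2*q^2 + (k2 + (q-1-m2)*q))*q + (q-1-m2) + 1 := rearr ..
    omega
  obtain ⟨hX, hm⟩ := split_unique (by omega) (by omega) h'
  have e1 : (q-1-m1)*q + (m1+1)*q = q*q := by
    rw [← Nat.add_mul]; congr 1; omega
  have e2 : (q-1-m2)*q + (m2+1)*q = q*q := by
    rw [← Nat.add_mul]; congr 1; omega
  obtain ⟨hi, hk⟩ := split_unique (Q := q^2) (by omega) (by omega) hX
  have hmm : m1 = m2 := by omega
  subst hmm hi
  have hkk : k1 = k2 := by omega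
  subst hkk
  rfl

lemma card1 {q : ℕ} (hq : 2 ≤ q) :
    ((pt1 q).card : ℤ) * 24 = 4*(q:ℤ)^5 + 6*(q:ℤ)^4 - 4*(q:ℤ)^3 - 6*(q:ℤ)^2 := by
  have e0 : (pt1 q).card
      = ∑ m' ∈ Finset.range q, ∑ k ∈ Finset.range ((m'+1)*q-1), ((m'+1)*q - 1 - k) := by
    simp [pt1, Finset.card_sigma]
  have e1 : ∀ m' ∈ Finset.range q,
      (∑ k ∈ Finset.range ((m'+1)*q-1), ((m'+1)*q-1-k)) * 2 = ((m'+1)*q-1)*((m'+1)*q) := by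
    intro m' _
    have hN : (m'+1)*q - 1 + 1 = (m'+1)*q := by
      have : 1*1 ≤ (m'+1)*q := Nat.mul_le_mul (by omega) (by omega)
      omega
    rw [tri_mul_two ((m'+1)*q-1), hN]
  have e2 : (pt1 q).card * 2 = ∑ m' ∈ Finset.range q, ((m'+1)*q-1)*((m'+1)*q) := by
    rw [e0, Finset.sum_mul]
    exact Finset.sum_congr rfl e1
  have e3 : ((pt1 q).card : ℤ) * 2
      = ∑ m' ∈ Finset.range q, ((((m'+1)*q-1)*((m'+1)*q) : ℕ) : ℤ) := by
    exact_mod_cast congrArg (Nat.cast : ℕ → ℤ) e2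
  have e4 : ∀ m' ∈ Finset.range q, ((((m'+1)*q-1)*((m'+1)*q) : ℕ) : ℤ)
      = ((q:ℤ)^2-q) + (2*(q:ℤ)^2-q)*(m':ℤ) + (q:ℤ)^2*(m':ℤ)^2 + 0*(m':ℤ)^3 := by
    intro m' _
    have h1 : 1*1 ≤ (m'+1)*q := Nat.mul_le_mul (by omega) (by omega)
    push_cast [Nat.cast_sub (by omega : 1 ≤ (m'+1)*q)]
    ring
  have e5 := zsum_poly ((q:ℤ)^2-q) (2*(q:ℤ)^2-q) ((q:ℤ)^2) 0 q
  rw [← Finset.sum_congr rfl e4] at e5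
  have : ((pt1 q).card : ℤ) * 2 * 12
      = 12*(q:ℤ)*((q:ℤ)^2-q) + 6*(2*(q:ℤ)^2-q)*((q:ℤ)*((q:ℤ)-1))
        + 2*(q:ℤ)^2*((q:ℤ)*((q:ℤ)-1)*(2*(q:ℤ)-1)) + 3*0*((q:ℤ)^2*((q:ℤ)-1)^2) := by
    rw [e3, e5]
  linarith [this, sq_nonneg ((q:ℤ))]

end GKaux

namespace GKaux

def pt2 (q : ℕ) : Finset ((_ : ℕ) × (_ : ℕ) × (_ : ℕ) × ℕ) :=
  (Finset.range (q-1)).sigma fun j' => (Finset.range (q-1-j')).sigma fun m'' =>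
    (Finset.range q).sigma fun k => Finset.range ((j'+m''+2)*q - 2 - j' - k)

def em2 (q : ℕ) (p : (_ : ℕ) × (_ : ℕ) × (_ : ℕ) × ℕ) : ℕ :=
  p.2.2.2*q^3 + (p.1+1) + p.2.2.1*q + (q-2-p.1-p.2.1)*(q^2+1) + 1

lemma mem_pt2 {q j' m'' k i : ℕ} :
    (⟨j', m'', k, i⟩ : (_ : ℕ) × (_ : ℕ) × (_ : ℕ) × ℕ) ∈ pt2 q
    ↔ j' < q-1 ∧ m'' < q-1-j' ∧ k < q ∧ i < (j'+m''+2)*q - 2 - j' - k := by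
  simp [pt2, Finset.mem_sigma, Finset.mem_range, and_assoc]

def pt3 (q : ℕ) : Finset ((_ : ℕ) × (_ : ℕ) × (_ : ℕ) × ℕ) :=
  (Finset.range (q-2)).sigma fun t => (Finset.range q).sigma fun k =>
    (Finset.range (t+1)).sigma fun x => Finset.range (t+1-x)

def em3 (q : ℕ) (p : (_ : ℕ) × (_ : ℕ) × (_ : ℕ) × ℕ) : ℕ :=
  (q*q - 1 - (p.1+2)*q - p.2.1 + p.2.2.1)*q^3 + p.2.2.2 + p.2.1*q + (p.1+2)*q^2 + 1

lemma mem_pt3 {q t k x j : ℕ} :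
    (⟨t, k, x, j⟩ : (_ : ℕ) × (_ : ℕ) × (_ : ℕ) × ℕ) ∈ pt3 q
    ↔ t < q-2 ∧ k < q ∧ x < t+1 ∧ j < t+1-x := by
  simp [pt3, Finset.mem_sigma, Finset.mem_range, and_assoc]

lemma im2 {q : ℕ} (hq : 2 ≤ q) :
    gkPhi q '' gkCalG2 q = ↑((pt2 q).image (em2 q)) := by
  have hq2 : q^2 = q*q := sq q
  have h4q : 4 ≤ q*q := Nat.mul_le_mul hq hq
  ext v
  simp only [Finset.coe_image, Set.mem_image, Finset.mem_coe]
  constructor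
  · rintro ⟨⟨i,j,k,m,n⟩, ⟨⟨hjb,hwt⟩, hj1, hj2, hkb, hjm, hn0⟩, rfl⟩
    replace hj1 : 1 ≤ j := hj1
    replace hj2 : j ≤ q-1 := hj2
    replace hkb : k ≤ q-1 := hkb
    replace hjm : j + m ≤ q-1 := hjm
    have hWid : gkWt q (i,j,k,m,n)
        = i + j + k + m*q + (∑ x, n x * ((x.1+2)*q - (x.1+1))) := rfl
    rw [hWid, sum_zero_fun n _ hn0] at hwt
    have eA : ((j-1)+(q-1-j-m)+2)*q + m*q = q*q := by
      rw [← Nat.add_mul]; congr 1; omega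
    refine ⟨⟨j-1, q-1-j-m, k, i⟩, mem_pt2.mpr ⟨by omega, by omega, by omega, by omega⟩, ?_⟩
    have e1 : q-2-(j-1)-(q-1-j-m) = m := by omega
    have e2 : (j-1)+1 = j := by omega
    show i*q^3 + ((j-1)+1) + k*q + (q-2-(j-1)-(q-1-j-m))*(q^2+1) + 1 = _
    rw [e1, e2]
    have hPid : gkPhi q (i,j,k,m,n)
        = i*q^3 + j + k*q + m*(q^2+1) + (∑ x, n x * ((x.1+2)*q^2)) + 1 := rfl
    rw [hPid, sum_zero_fun n _ hn0]
  · rintro ⟨⟨j',m'',k,i⟩, hp, rfl⟩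
    obtain ⟨h1, h2, h3, h4⟩ := mem_pt2.mp hp
    have eA : (j'+m''+2)*q + (q-2-j'-m'')*q = q*q := by
      rw [← Nat.add_mul]; congr 1; omega
    refine ⟨(i, j'+1, k, q-2-j'-m'', fun _ => 0),
      ⟨⟨show j'+1 ≤ q-1 by omega, ?_⟩, show 1 ≤ j'+1 by omega, show j'+1 ≤ q-1 by omega,
        show k ≤ q-1 by omega, show (j'+1) + (q-2-j'-m'') ≤ q-1 by omega, fun _ => rfl⟩, ?_⟩
    · have hWid : gkWt q (i,j'+1,k,q-2-j'-m'',fun _ => 0)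
          = i + (j'+1) + k + (q-2-j'-m'')*q
            + (∑ x : Fin (q-2), (fun _ => 0) x * ((x.1+2)*q - (x.1+1))) := rfl
      rw [hWid, sum_zero_fun _ _ (fun _ => rfl)]
      omega
    · have hPid : gkPhi q (i,j'+1,k,q-2-j'-m'',fun _ => 0)
          = i*q^3 + (j'+1) + k*q + (q-2-j'-m'')*(q^2+1)
            + (∑ x : Fin (q-2), (fun _ => 0) x * ((x.1+2)*q^2)) + 1 := rfl
      rw [hPid, sum_zero_fun _ _ (fun _ => rfl)]
      show _ = i*q^3 + (j'+1) + k*q + (q-2-j'-m'')*(q^2+1) + 1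
      omega

lemma im3 {q : ℕ} (hq : 2 ≤ q) :
    gkPhi q '' gkCalG3 q = ↑((pt3 q).image (em3 q)) := by
  have hq2 : q^2 = q*q := sq q
  have h4q : 4 ≤ q*q := Nat.mul_le_mul hq hq
  ext v
  simp only [Finset.coe_image, Set.mem_image, Finset.mem_coe]
  constructor
  · rintro ⟨⟨i,j,k,m,n⟩, ⟨⟨hjb,hwt⟩, hm0, hkb, s, hs1, hs0, hik⟩, rfl⟩
    replace hm0 : m = 0 := hm0
    subst hm0
    replace hjb : j ≤ q-1 := hjb
    replace hkb : k ≤ q-1 := hkb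
    replace hik : q^2-1 ≤ i + k + (s.1+2)*q := hik
    have hslt : s.1 < q-2 := s.2
    have hWid : gkWt q (i,j,k,0,n)
        = i + j + k + 0*q + (∑ x, n x * ((x.1+2)*q - (x.1+1))) := rfl
    rw [hWid, sum_of_single n _ s hs1 hs0] at hwt
    have hsq : (s.1+2)*q + q ≤ q*q := by
      have h5 : (s.1+2+1)*q ≤ q*q := Nat.mul_le_mul_right q (by omega)
      have h6 : (s.1+2+1)*q = (s.1+2)*q + q := by ring
      omega
    have hsle : s.1 + 2 ≤ (s.1+2)*q := Nat.le_mul_of_pos_right _ (by omega)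
    refine ⟨⟨s.1, k, i - (q*q - 1 - (s.1+2)*q - k), j⟩,
      mem_pt3.mpr ⟨by omega, by omega, by omega, by omega⟩, ?_⟩
    have e1 : q*q - 1 - (s.1+2)*q - k + (i - (q*q - 1 - (s.1+2)*q - k)) = i := by omega
    show (q*q - 1 - (s.1+2)*q - k + (i - (q*q - 1 - (s.1+2)*q - k)))*q^3 + j + k*q
        + (s.1+2)*q^2 + 1 = _
    rw [e1]
    have hPid : gkPhi q (i,j,k,0,n)
        = i*q^3 + j + k*q + 0*(q^2+1) + (∑ x, n x * ((x.1+2)*q^2)) + 1 := rfl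
    rw [hPid, sum_of_single n _ s hs1 hs0]
    omega
  · rintro ⟨⟨t,k,x,j⟩, hp, rfl⟩
    obtain ⟨h1, h2, h3, h4⟩ := mem_pt3.mp hp
    have htlt : t < q - 2 := h1
    have hsq : (t+2)*q + q ≤ q*q := by
      have h5 : (t+2+1)*q ≤ q*q := Nat.mul_le_mul_right q (by omega)
      have h6 : (t+2+1)*q = (t+2)*q + q := by ring
      omega
    have hsle : t + 2 ≤ (t+2)*q := Nat.le_mul_of_pos_right _ (by omega)
    have hPu : (∑ y, (Pi.single (⟨t, htlt⟩ : Fin (q-2)) 1 : Fin (q-2) → ℕ) y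
        * ((y.1+2)*q^2)) = (t+2)*q^2 := by
      rw [sum_single]
    have hWu : (∑ y, (Pi.single (⟨t, htlt⟩ : Fin (q-2)) 1 : Fin (q-2) → ℕ) y
        * ((y.1+2)*q - (y.1+1))) = (t+2)*q - (t+1) := by
      rw [sum_single]
    refine ⟨(q*q - 1 - (t+2)*q - k + x, j, k, 0, Pi.single ⟨t, htlt⟩ 1),
      ⟨⟨show j ≤ q-1 by omega, ?_⟩, rfl, show k ≤ q-1 by omega,
        ⟨t, htlt⟩, Pi.single_eq_same _ _, fun s' hne => Pi.single_eq_of_ne hne _, ?_⟩, ?_⟩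
    · have hWid : gkWt q (q*q - 1 - (t+2)*q - k + x, j, k, 0, Pi.single ⟨t, htlt⟩ 1)
          = (q*q - 1 - (t+2)*q - k + x) + j + k + 0*q
            + (∑ y, (Pi.single (⟨t, htlt⟩ : Fin (q-2)) 1 : Fin (q-2) → ℕ) y
              * ((y.1+2)*q - (y.1+1))) := rfl
      rw [hWid, hWu]
      omega
    · show q^2 - 1 ≤ (q*q - 1 - (t+2)*q - k + x) + k + (t+2)*q
      omega
    · have hPid : gkPhi q (q*q - 1 - (t+2)*q - k + x, j, k, 0, Pi.single ⟨t, htlt⟩ 1)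
          = (q*q - 1 - (t+2)*q - k + x)*q^3 + j + k*q + 0*(q^2+1)
            + (∑ y, (Pi.single (⟨t, htlt⟩ : Fin (q-2)) 1 : Fin (q-2) → ℕ) y
              * ((y.1+2)*q^2)) + 1 := rfl
      rw [hPid, hPu]
      show _ = (q*q - 1 - (t+2)*q - k + x)*q^3 + j + k*q + (t+2)*q^2 + 1
      omega

lemma inj2 {q : ℕ} (hq : 2 ≤ q) : Set.InjOn (em2 q) ↑(pt2 q) := by
  rintro ⟨j1,m1,k1,i1⟩ hp ⟨j2,m2,k2,i2⟩ hp' h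
  obtain ⟨a1, a2, a3, a4⟩ := mem_pt2.mp (Finset.mem_coe.mp hp)
  obtain ⟨b1, b2, b3, b4⟩ := mem_pt2.mp (Finset.mem_coe.mp hp')
  have rearr : ∀ a b c d : ℕ, a*q^3 + (b+1) + c*q + d*(q^2+1) + 1
      = (((a*q + d)*q + c)*q + (b+1+d)) + 1 := by intros; ring
  have h' : ((i1*q + (q-2-j1-m1))*q + k1)*q + (j1+1+(q-2-j1-m1))
      = ((i2*q + (q-2-j2-m2))*q + k2)*q + (j2+1+(q-2-j2-m2)) := by
    have e1 : em2 q ⟨j1,m1,k1,i1⟩ = (((i1*q + (q-2-j1-m1))*q + k1)*q + (j1+1+(q-2-j1-m1))) + 1 :=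
      rearr ..
    have e2 : em2 q ⟨j2,m2,k2,i2⟩ = (((i2*q + (q-2-j2-m2))*q + k2)*q + (j2+1+(q-2-j2-m2))) + 1 :=
      rearr ..
    omega
  obtain ⟨hX, hd0⟩ := split_unique (by omega) (by omega) h'
  obtain ⟨hY, hk⟩ := split_unique (by omega) (by omega) hX
  obtain ⟨hi, hmm⟩ := split_unique (by omega) (by omega) hY
  have hj : j1 = j2 := by omega
  have hm : m1 = m2 := by omega
  subst hj hm hk hi
  rfl

lemma inj3 {q : ℕ} (hq : 2 ≤ q) : Set.InjOn (em3 q) ↑(pt3 q) := by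
  rintro ⟨t1,k1,x1,j1⟩ hp ⟨t2,k2,x2,j2⟩ hp' h
  obtain ⟨a1, a2, a3, a4⟩ := mem_pt3.mp (Finset.mem_coe.mp hp)
  obtain ⟨b1, b2, b3, b4⟩ := mem_pt3.mp (Finset.mem_coe.mp hp')
  have rearr : ∀ a b c d : ℕ, a*q^3 + b + c*q + d*q^2 + 1
      = (((a*q + d)*q + c)*q + b) + 1 := by intros; ring
  have hre : ∀ a b c d : ℕ, a*q^3 + b + c*q + d*(q^2+1)+1 = 0 → True := fun _ _ _ _ _ => trivial
  have h' : (((q*q - 1 - (t1+2)*q - k1 + x1)*q + (t1+2))*q + k1)*q + j1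
      = (((q*q - 1 - (t2+2)*q - k2 + x2)*q + (t2+2))*q + k2)*q + j2 := by
    have e1 : em3 q ⟨t1,k1,x1,j1⟩
        = ((((q*q - 1 - (t1+2)*q - k1 + x1)*q + (t1+2))*q + k1)*q + j1) + 1 := rearr ..
    have e2 : em3 q ⟨t2,k2,x2,j2⟩
        = ((((q*q - 1 - (t2+2)*q - k2 + x2)*q + (t2+2))*q + k2)*q + j2) + 1 := rearr ..
    omega
  obtain ⟨hX, hj⟩ := split_unique (by omega) (by omega) h'
  obtain ⟨hY, hk⟩ := split_unique (by omega) (by omega) hX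
  obtain ⟨hI, ht⟩ := split_unique (by omega) (by omega) hY
  have ht' : t1 = t2 := by omega
  subst ht' hk hj
  have hsq : (t1+2)*q + q ≤ q*q := by
    have h5 : (t1+2+1)*q ≤ q*q := Nat.mul_le_mul_right q (by omega)
    have h6 : (t1+2+1)*q = (t1+2)*q + q := by ring
    omega
  have hx : x1 = x2 := by omega
  subst hx
  rfl

end GKaux

namespace GKaux

lemma card2 {q : ℕ} (hq : 2 ≤ q) :
    ((pt2 q).card : ℤ) * 1728
    = 576*(q:ℤ)^5 - 720*(q:ℤ)^4 - 576*(q:ℤ)^3 + 720*(q:ℤ)^2 := by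
  have e0 : (pt2 q).card
      = ∑ j' ∈ Finset.range (q-1), ∑ m'' ∈ Finset.range (q-1-j'),
          ∑ k ∈ Finset.range q, ((j'+m''+2)*q - 2 - j' - k) := by
    simp [pt2, Finset.card_sigma]
  have L1 : ∀ j' ∈ Finset.range (q-1), ∀ m'' ∈ Finset.range (q-1-j'),
      (∑ k ∈ Finset.range q, (((j'+m''+2)*q - 2 - j' - k : ℕ) : ℤ)) * 12
      = 12*(q:ℤ)^2*(m'':ℤ) + (12*(q:ℤ)^2-12*(q:ℤ))*(j':ℤ) + 18*(q:ℤ)^2 - 18*(q:ℤ) := by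
    intro j' hj' m'' hm''
    have hcast : ∀ k ∈ Finset.range q, (((j'+m''+2)*q - 2 - j' - k : ℕ) : ℤ)
        = (((j':ℤ)+(m'':ℤ)+2)*(q:ℤ) - 2 - (j':ℤ)) + (-1)*(k:ℤ) + 0*(k:ℤ)^2 + 0*(k:ℤ)^3 := by
      intro k hk
      have hk' : k < q := Finset.mem_range.mp hk
      have hle : 2 + j' + k ≤ (j'+m''+2)*q := by
        have h1 : (j'+2)*q ≤ (j'+m''+2)*q := Nat.mul_le_mul_right _ (by omega)
        have h2 : (j'+2)*q = j'*q + 2*q := by ring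
        have h3 : j' ≤ j'*q := Nat.le_mul_of_pos_right _ (by omega)
        omega
      rw [show (j'+m''+2)*q - 2 - j' - k = (j'+m''+2)*q - (2+j'+k) by omega,
        Nat.cast_sub hle]
      push_cast
      ring
    rw [Finset.sum_congr rfl hcast, zsum_poly]
    push_cast
    ring
  have L2 : ∀ j' ∈ Finset.range (q-1),
      (∑ m'' ∈ Finset.range (q-1-j'), ∑ k ∈ Finset.range q,
        (((j'+m''+2)*q - 2 - j' - k : ℕ) : ℤ)) * 144
      = 216*(q:ℤ) + 360*(q:ℤ)*(j':ℤ) + 144*(q:ℤ)*(j':ℤ)^2 - 288*(q:ℤ)^2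
        - 288*(q:ℤ)^2*(j':ℤ) - 72*(q:ℤ)^2*(j':ℤ)^2 + 72*(q:ℤ)^4 := by
    intro j' hj'
    have hj'' : j' < q - 1 := Finset.mem_range.mp hj'
    have step1 : (∑ m'' ∈ Finset.range (q-1-j'), ∑ k ∈ Finset.range q,
        (((j'+m''+2)*q - 2 - j' - k : ℕ) : ℤ)) * 144
        = (∑ m'' ∈ Finset.range (q-1-j'), ((∑ k ∈ Finset.range q,
            (((j'+m''+2)*q - 2 - j' - k : ℕ) : ℤ)) * 12)) * 12 := by
      rw [show (144:ℤ) = 12*12 by norm_num, ← mul_assoc, Finset.sum_mul]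
    rw [step1, Finset.sum_congr rfl (fun m'' hm'' => L1 j' hj' m'' hm''),
      Finset.sum_congr rfl (fun m'' (_ : m'' ∈ Finset.range (q-1-j')) =>
        (by push_cast; ring :
          12*(q:ℤ)^2*(m'':ℤ) + (12*(q:ℤ)^2-12*(q:ℤ))*(j':ℤ) + 18*(q:ℤ)^2 - 18*(q:ℤ)
          = ((12*(q:ℤ)^2-12*(q:ℤ))*(j':ℤ) + 18*(q:ℤ)^2 - 18*(q:ℤ))
            + (12*(q:ℤ)^2)*(m'':ℤ) + 0*(m'':ℤ)^2 + 0*(m'':ℤ)^3)),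
      zsum_poly]
    have hc : ((q - 1 - j' : ℕ) : ℤ) = (q:ℤ) - 1 - (j':ℤ) := by
      have : ((q - 1 - j' : ℕ) : ℤ) = ((q - (1 + j') : ℕ) : ℤ) := by congr 1; omega
      rw [this, Nat.cast_sub (by omega)]
      push_cast
      ring
    rw [hc]
    ring
  have e3 : ((pt2 q).card : ℤ)
      = ∑ j' ∈ Finset.range (q-1), ∑ m'' ∈ Finset.range (q-1-j'),
          ∑ k ∈ Finset.range q, (((j'+m''+2)*q - 2 - j' - k : ℕ) : ℤ) := by
    rw [e0]
    push_cast
    rfl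
  rw [e3]
  have step2 : (∑ j' ∈ Finset.range (q-1), ∑ m'' ∈ Finset.range (q-1-j'),
      ∑ k ∈ Finset.range q, (((j'+m''+2)*q - 2 - j' - k : ℕ) : ℤ)) * 1728
      = (∑ j' ∈ Finset.range (q-1), ((∑ m'' ∈ Finset.range (q-1-j'),
          ∑ k ∈ Finset.range q, (((j'+m''+2)*q - 2 - j' - k : ℕ) : ℤ)) * 144)) * 12 := by
    rw [show (1728:ℤ) = 144*12 by norm_num, ← mul_assoc, Finset.sum_mul]
  rw [step2, Finset.sum_congr rfl (fun j' hj' => L2 j' hj'),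
    Finset.sum_congr rfl (fun j' (_ : j' ∈ Finset.range (q-1)) =>
      (by push_cast; ring :
        216*(q:ℤ) + 360*(q:ℤ)*(j':ℤ) + 144*(q:ℤ)*(j':ℤ)^2 - 288*(q:ℤ)^2
          - 288*(q:ℤ)^2*(j':ℤ) - 72*(q:ℤ)^2*(j':ℤ)^2 + 72*(q:ℤ)^4
        = (216*(q:ℤ) - 288*(q:ℤ)^2 + 72*(q:ℤ)^4)
          + (360*(q:ℤ) - 288*(q:ℤ)^2)*(j':ℤ)
          + (144*(q:ℤ) - 72*(q:ℤ)^2)*(j':ℤ)^2 + 0*(j':ℤ)^3)),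
    zsum_poly]
  have hc : ((q - 1 : ℕ) : ℤ) = (q:ℤ) - 1 := by
    rw [Nat.cast_sub (by omega)]
    push_cast
    ring
  rw [hc]
  ring

lemma card3 {q : ℕ} (hq : 2 ≤ q) :
    ((pt3 q).card : ℤ) * 24 = 4*(q:ℤ)^4 - 12*(q:ℤ)^3 + 8*(q:ℤ)^2 := by
  have e0 : (pt3 q).card
      = ∑ t ∈ Finset.range (q-2), ∑ k ∈ Finset.range q,
          ∑ x ∈ Finset.range (t+1), (t+1-x) := by
    simp [pt3, Finset.card_sigma]
  have e1 : ∀ t ∈ Finset.range (q-2),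
      (∑ k ∈ Finset.range q, ∑ x ∈ Finset.range (t+1), (t+1-x)) * 2
      = q * ((t+1)*(t+2)) := by
    intro t _
    rw [Finset.sum_const, Finset.card_range, smul_eq_mul, mul_assoc, tri_mul_two (t+1)]
  have e2 : (pt3 q).card * 2 = ∑ t ∈ Finset.range (q-2), q*((t+1)*(t+2)) := by
    rw [e0, Finset.sum_mul]
    exact Finset.sum_congr rfl e1
  have e3 : ((pt3 q).card : ℤ) * 2
      = ∑ t ∈ Finset.range (q-2), ((q*((t+1)*(t+2)) : ℕ) : ℤ) := by
    exact_mod_cast congrArg (Nat.cast : ℕ → ℤ) e2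
  have e4 : ∀ t ∈ Finset.range (q-2), ((q*((t+1)*(t+2)) : ℕ) : ℤ)
      = 2*(q:ℤ) + 3*(q:ℤ)*(t:ℤ) + (q:ℤ)*(t:ℤ)^2 + 0*(t:ℤ)^3 := by
    intro t _
    push_cast
    ring
  have e5 := zsum_poly (2*(q:ℤ)) (3*(q:ℤ)) ((q:ℤ)) 0 (q-2)
  rw [← Finset.sum_congr rfl e4] at e5
  have hc : ((q - 2 : ℕ) : ℤ) = (q:ℤ) - 2 := by
    rw [Nat.cast_sub (by omega)]
    push_cast
    ring
  rw [hc] at e5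
  have : ((pt3 q).card : ℤ) * 2 * 12
      = 12*((q:ℤ)-2)*(2*(q:ℤ)) + 6*(3*(q:ℤ))*(((q:ℤ)-2)*(((q:ℤ)-2)-1))
        + 2*(q:ℤ)*(((q:ℤ)-2)*(((q:ℤ)-2)-1)*(2*((q:ℤ)-2)-1))
        + 3*0*(((q:ℤ)-2)^2*(((q:ℤ)-2)-1)^2) := by
    rw [e3, e5]
  linarith [this]

end GKaux

namespace GKaux

lemma disj12 {q : ℕ} (hq : 2 ≤ q) :
    Disjoint (gkPhi q '' gkCalG1 q) (gkPhi q '' gkCalG2 q) := by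
  have hq2 : q^2 = q*q := sq q
  have h4q : 4 ≤ q*q := Nat.mul_le_mul hq hq
  rw [Set.disjoint_left]
  rintro v ⟨⟨i,j,k,m,n⟩, ⟨⟨hjb,hwt⟩,hj0,hn0⟩, rfl⟩
      ⟨⟨i2,j2,k2,m2,n2⟩, ⟨⟨hjb2,hwt2⟩,hj21,hj2b,hk2b,hjm2,hn20⟩, heq⟩
  replace hj0 : j = 0 := hj0
  subst hj0
  replace hj21 : 1 ≤ j2 := hj21
  replace hk2b : k2 ≤ q-1 := hk2b
  replace hjm2 : j2 + m2 ≤ q-1 := hjm2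
  have hWid : gkWt q (i,0,k,m,n)
      = i + 0 + k + m*q + (∑ x, n x * ((x.1+2)*q - (x.1+1))) := rfl
  rw [hWid, sum_zero_fun n _ hn0] at hwt
  have hm : m ≤ q - 1 := by
    by_contra hc
    have h4 : q * q ≤ m * q := Nat.mul_le_mul_right _ (by omega)
    omega
  have hPid : gkPhi q (i,0,k,m,n)
      = i*q^3 + 0 + k*q + m*(q^2+1) + (∑ x, n x * ((x.1+2)*q^2)) + 1 := rfl
  have hPid2 : gkPhi q (i2,j2,k2,m2,n2)
      = i2*q^3 + j2 + k2*q + m2*(q^2+1) + (∑ x, n2 x * ((x.1+2)*q^2)) + 1 := rfl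
  rw [hPid, sum_zero_fun n _ hn0] at heq
  rw [hPid2, sum_zero_fun n2 _ hn20] at heq
  have rearr1 : i*q^3 + 0 + k*q + m*(q^2+1) + 0 + 1 = (i*q^2 + (k + m*q))*q + m + 1 := by ring
  have rearr2 : i2*q^3 + j2 + k2*q + m2*(q^2+1) + 0 + 1
      = ((i2*q + m2)*q + k2)*q + (j2+m2) + 1 := by ring
  rw [rearr1, rearr2] at heq
  have h' : ((i2*q + m2)*q + k2)*q + (j2+m2) = (i*q^2 + (k + m*q))*q + m := by omega
  obtain ⟨hX, hd0⟩ := split_unique (by omega) (by omega) h'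
  have hX' : i2*q^2 + (m2*q + k2) = i*q^2 + (k + m*q) := by
    have : (i2*q + m2)*q + k2 = i2*q^2 + (m2*q + k2) := by ring
    omega
  have hm2q : m2*q + q ≤ q*q := by
    have h5 : (m2+1)*q ≤ q*q := Nat.mul_le_mul_right q (by omega)
    have h6 : (m2+1)*q = m2*q + q := by ring
    omega
  obtain ⟨hi, hkk⟩ := split_unique (Q := q^2) (by omega) (by omega) hX'
  -- m = j2 + m2 ≥ m2 + 1, so k + m*q = m2*q + k2 forces k2 ≥ q
  have hmm : m2 + 1 ≤ m := by omega
  have hge : (m2+1)*q ≤ m*q := Nat.mul_le_mul_right _ hmm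
  have h6 : (m2+1)*q = m2*q + q := by ring
  omega

lemma disj13 {q : ℕ} (hq : 2 ≤ q) :
    Disjoint (gkPhi q '' gkCalG1 q) (gkPhi q '' gkCalG3 q) := by
  have hq2 : q^2 = q*q := sq q
  have h4q : 4 ≤ q*q := Nat.mul_le_mul hq hq
  rw [Set.disjoint_left]
  rintro v ⟨⟨i,j,k,m,n⟩, ⟨⟨hjb,hwt⟩,hj0,hn0⟩, rfl⟩
      ⟨⟨i3,j3,k3,m3,n3⟩, ⟨⟨hjb3,hwt3⟩,hm30,hk3b,s,hs1,hs0,hik⟩, heq⟩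
  replace hj0 : j = 0 := hj0
  subst hj0
  replace hm30 : m3 = 0 := hm30
  subst hm30
  replace hk3b : k3 ≤ q-1 := hk3b
  replace hjb3 : j3 ≤ q-1 := hjb3
  replace hik : q^2-1 ≤ i3 + k3 + (s.1+2)*q := hik
  have hslt : s.1 < q-2 := s.2
  have hWid : gkWt q (i,0,k,m,n)
      = i + 0 + k + m*q + (∑ x, n x * ((x.1+2)*q - (x.1+1))) := rfl
  rw [hWid, sum_zero_fun n _ hn0] at hwt
  have hm : m ≤ q - 1 := by
    by_contra hc
    have h4 : q * q ≤ m * q := Nat.mul_le_mul_right _ (by omega)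
    omega
  have hPid : gkPhi q (i,0,k,m,n)
      = i*q^3 + 0 + k*q + m*(q^2+1) + (∑ x, n x * ((x.1+2)*q^2)) + 1 := rfl
  have hPid3 : gkPhi q (i3,j3,k3,0,n3)
      = i3*q^3 + j3 + k3*q + 0*(q^2+1) + (∑ x, n3 x * ((x.1+2)*q^2)) + 1 := rfl
  rw [hPid, sum_zero_fun n _ hn0] at heq
  rw [hPid3, sum_of_single n3 _ s hs1 hs0] at heq
  have rearr1 : i*q^3 + 0 + k*q + m*(q^2+1) + 0 + 1 = (i*q^2 + (k + m*q))*q + m + 1 := by ring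
  have rearr3 : i3*q^3 + j3 + k3*q + 0*(q^2+1) + (s.1+2)*q^2 + 1
      = ((i3*q + (s.1+2))*q + k3)*q + j3 + 1 := by ring
  rw [rearr1, rearr3] at heq
  have h' : ((i3*q + (s.1+2))*q + k3)*q + j3 = (i*q^2 + (k + m*q))*q + m := by omega
  obtain ⟨hX, hd0⟩ := split_unique (by omega) (by omega) h'
  have hX' : i3*q^2 + ((s.1+2)*q + k3) = i*q^2 + (k + m*q) := by
    have : (i3*q + (s.1+2))*q + k3 = i3*q^2 + ((s.1+2)*q + k3) := by ring
    omega
  have hsq : (s.1+2)*q + q ≤ q*q := by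
    have h5 : (s.1+2+1)*q ≤ q*q := Nat.mul_le_mul_right q (by omega)
    have h6 : (s.1+2+1)*q = (s.1+2)*q + q := by ring
    omega
  obtain ⟨hi, hkk⟩ := split_unique (Q := q^2) (by omega) (by omega) hX'
  omega

lemma disj23 {q : ℕ} (hq : 2 ≤ q) :
    Disjoint (gkPhi q '' gkCalG2 q) (gkPhi q '' gkCalG3 q) := by
  have hq2 : q^2 = q*q := sq q
  have h4q : 4 ≤ q*q := Nat.mul_le_mul hq hq
  rw [Set.disjoint_left]
  rintro v ⟨⟨i2,j2,k2,m2,n2⟩, ⟨⟨hjb2,hwt2⟩,hj21,hj2b,hk2b,hjm2,hn20⟩, rfl⟩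
      ⟨⟨i3,j3,k3,m3,n3⟩, ⟨⟨hjb3,hwt3⟩,hm30,hk3b,s,hs1,hs0,hik⟩, heq⟩
  replace hj21 : 1 ≤ j2 := hj21
  replace hk2b : k2 ≤ q-1 := hk2b
  replace hjm2 : j2 + m2 ≤ q-1 := hjm2
  replace hm30 : m3 = 0 := hm30
  subst hm30
  replace hk3b : k3 ≤ q-1 := hk3b
  replace hjb3 : j3 ≤ q-1 := hjb3
  replace hik : q^2-1 ≤ i3 + k3 + (s.1+2)*q := hik
  have hslt : s.1 < q-2 := s.2
  have hWid2 : gkWt q (i2,j2,k2,m2,n2)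
      = i2 + j2 + k2 + m2*q + (∑ x, n2 x * ((x.1+2)*q - (x.1+1))) := rfl
  rw [hWid2, sum_zero_fun n2 _ hn20] at hwt2
  have hPid2 : gkPhi q (i2,j2,k2,m2,n2)
      = i2*q^3 + j2 + k2*q + m2*(q^2+1) + (∑ x, n2 x * ((x.1+2)*q^2)) + 1 := rfl
  have hPid3 : gkPhi q (i3,j3,k3,0,n3)
      = i3*q^3 + j3 + k3*q + 0*(q^2+1) + (∑ x, n3 x * ((x.1+2)*q^2)) + 1 := rfl
  rw [hPid2, sum_zero_fun n2 _ hn20] at heq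
  rw [hPid3, sum_of_single n3 _ s hs1 hs0] at heq
  have rearr2 : i2*q^3 + j2 + k2*q + m2*(q^2+1) + 0 + 1
      = ((i2*q + m2)*q + k2)*q + (j2+m2) + 1 := by ring
  have rearr3 : i3*q^3 + j3 + k3*q + 0*(q^2+1) + (s.1+2)*q^2 + 1
      = ((i3*q + (s.1+2))*q + k3)*q + j3 + 1 := by ring
  rw [rearr2, rearr3] at heq
  have h' : ((i3*q + (s.1+2))*q + k3)*q + j3 = ((i2*q + m2)*q + k2)*q + (j2+m2) := by omega
  obtain ⟨hX, hd0⟩ := split_unique (by omega) (by omega) h'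
  obtain ⟨hY, hkk⟩ := split_unique (by omega) (by omega) hX
  obtain ⟨hi, hm2s⟩ := split_unique (by omega) (by omega) hY
  have hmq : m2*q = (s.1+2)*q := by rw [← hm2s]
  omega

lemma gk_union {q : ℕ} (hq : 2 ≤ q) :
    gkG q = (gkPhi q '' gkCalG1 q) ∪ (gkPhi q '' gkCalG2 q) ∪ (gkPhi q '' gkCalG3 q) := by
  apply Set.Subset.antisymm
  · rintro v ⟨t, ht, rfl⟩
    obtain ⟨t', ht', he⟩ := gk_key hq (mu q t) t ht le_rfl
    rcases ht' with (h|h)|h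
    · exact Or.inl (Or.inl ⟨t', h, he⟩)
    · exact Or.inl (Or.inr ⟨t', h, he⟩)
    · exact Or.inr ⟨t', h, he⟩
  · rintro v ((⟨t,h,rfl⟩|⟨t,h,rfl⟩)|⟨t,h,rfl⟩)
    · exact ⟨t, h.1, rfl⟩
    · exact ⟨t, h.1, rfl⟩
    · exact ⟨t, h.1, rfl⟩

end GKaux

/-- `|G| = (q^5 - 2q^3 + q^2)/2` and `G = G₁ ∪ G₂ ∪ G₃`. -/
theorem gk_G_card (q : ℕ) (hq : IsPrimePow q) :
    (gkG q).ncard = (q ^ 5 - 2 * q ^ 3 + q ^ 2) / 2 ∧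
    gkG q = (gkPhi q '' gkCalG1 q) ∪ (gkPhi q '' gkCalG2 q) ∪ (gkPhi q '' gkCalG3 q) := by
  have hq2 : 2 ≤ q := hq.two_le
  have hu := GKaux.gk_union hq2
  refine ⟨?_, hu⟩
  rw [hu, GKaux.im1 hq2, GKaux.im2 hq2, GKaux.im3 hq2]
  rw [← Finset.coe_union, ← Finset.coe_union, Set.ncard_coe_finset]
  have d12 : Disjoint ((GKaux.pt1 q).image (GKaux.em1 q)) ((GKaux.pt2 q).image (GKaux.em2 q)) := by
    rw [← Finset.disjoint_coe, ← GKaux.im1 hq2, ← GKaux.im2 hq2]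
    exact GKaux.disj12 hq2
  have d13 : Disjoint ((GKaux.pt1 q).image (GKaux.em1 q)) ((GKaux.pt3 q).image (GKaux.em3 q)) := by
    rw [← Finset.disjoint_coe, ← GKaux.im1 hq2, ← GKaux.im3 hq2]
    exact GKaux.disj13 hq2
  have d23 : Disjoint ((GKaux.pt2 q).image (GKaux.em2 q)) ((GKaux.pt3 q).image (GKaux.em3 q)) := by
    rw [← Finset.disjoint_coe, ← GKaux.im2 hq2, ← GKaux.im3 hq2]
    exact GKaux.disj23 hq2
  rw [Finset.card_union_of_disjoint (Finset.disjoint_union_left.mpr ⟨d13, d23⟩),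
    Finset.card_union_of_disjoint d12,
    Finset.card_image_of_injOn (GKaux.inj1 hq2),
    Finset.card_image_of_injOn (GKaux.inj2 hq2),
    Finset.card_image_of_injOn (GKaux.inj3 hq2)]
  have c1 := GKaux.card1 hq2
  have c2 := GKaux.card2 hq2
  have c3 := GKaux.card3 hq2
  have htot : (((GKaux.pt1 q).card + (GKaux.pt2 q).card + (GKaux.pt3 q).card : ℕ) : ℤ) * 2
      + 2*(q:ℤ)^3 = (q:ℤ)^5 + (q:ℤ)^2 := by
    push_cast
    linarith [c1, c2, c3]
  have h2 : ((GKaux.pt1 q).card + (GKaux.pt2 q).card + (GKaux.pt3 q).card) * 2 + 2*q^3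
      = q^5 + q^2 := by
    exact_mod_cast htot
  have h3 : 2*q^3 ≤ q^5 := by
    have h5 : q^5 = q^3 * q^2 := by ring
    have h6 : q^3 * 2 ≤ q^3 * q^2 := Nat.mul_le_mul_left _ (by nlinarith)
    omega
  omega
end

section
/- The largest element of the set G is q^5 − 2q^3 + 1; that is, q^5 − 2q^3 + 1 ∈ G and every element of G is at most q^5 − 2q^3 + 1. Moreover, every tuple (i, j, k, m, n_1, …, n_{q−2}) producing an element of G satisfies i ≤ q^2 − 2, k ≤ q^2 − 2, m ≤ q − 1 and n_s ≤ ⌊(q+1)/(s+1)⌋ for each s. -/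
/-- The largest element of `G` is `q^5 - 2q^3 + 1`; moreover every tuple in `𝒢` satisfies
`i ≤ q^2 - 2`, `k ≤ q^2 - 2`, `m ≤ q - 1` and `n_s ≤ ⌊(q+1)/(s+1)⌋` for each `s`. -/
theorem gk_largest_gap (q : ℕ) (hq : IsPrimePow q) :
    (q ^ 5 - 2 * q ^ 3 + 1 ∈ gkG q ∧ ∀ x ∈ gkG q, x ≤ q ^ 5 - 2 * q ^ 3 + 1) ∧
    (∀ t ∈ gkCalG q, t.1 ≤ q ^ 2 - 2 ∧ t.2.2.1 ≤ q ^ 2 - 2 ∧ t.2.2.2.1 ≤ q - 1 ∧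
      ∀ s : Fin (q - 2), t.2.2.2.2 s ≤ (q + 1) / (s.1 + 2)) := by
  have hq2 : 2 ≤ q := hq.two_le
  have hq4 : 4 ≤ q ^ 2 := by nlinarith
  have hmul : (q ^ 2 - 2) * q ^ 3 = q ^ 5 - 2 * q ^ 3 := by
    rw [Nat.sub_mul, ← pow_add]
  constructor
  · constructor
    · refine ⟨(q ^ 2 - 2, 0, 0, 0, fun _ => 0), ⟨by simp, ?_⟩, ?_⟩
      · simp [gkWt]
      · simp [gkPhi, hmul]
    · rintro x ⟨⟨i, j, k, m, n⟩, ⟨hj, hw⟩, rfl⟩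
      simp only [gkWt] at hw
      simp only [gkPhi]
      have key : i * q ^ 3 + j + k * q + m * (q ^ 2 + 1) +
          (∑ s : Fin (q - 2), n s * ((s.1 + 2) * q ^ 2)) ≤
          (i + j + k + m * q + ∑ s : Fin (q - 2), n s * ((s.1 + 2) * q - (s.1 + 1))) * q ^ 3 := by
        have hsum : ∑ s : Fin (q - 2), n s * ((s.1 + 2) * q ^ 2) ≤
            (∑ s : Fin (q - 2), n s * ((s.1 + 2) * q - (s.1 + 1))) * q ^ 3 := by
          rw [Finset.sum_mul]
          refine Finset.sum_le_sum fun s _ => ?_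
          rw [mul_assoc]
          refine Nat.mul_le_mul_left _ ?_
          have h1 : (s.1 + 2) * 2 ≤ (s.1 + 2) * q := Nat.mul_le_mul_left _ hq2
          have h2 : s.1 + 3 ≤ (s.1 + 2) * q - (s.1 + 1) := by omega
          calc (s.1 + 2) * q ^ 2 ≤ (s.1 + 3) * q ^ 3 := by
                nlinarith [pow_pos (show 0 < q by omega) 2]
            _ ≤ ((s.1 + 2) * q - (s.1 + 1)) * q ^ 3 := Nat.mul_le_mul_right _ h2
        have hj3 : j ≤ j * q ^ 3 := Nat.le_mul_of_pos_right _ (by positivity)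
        have hk3 : k * q ≤ k * q ^ 3 := Nat.mul_le_mul_left _ (by nlinarith)
        have hm3 : m * (q ^ 2 + 1) ≤ m * q * q ^ 3 := by
          rw [mul_assoc]
          refine Nat.mul_le_mul_left _ ?_
          nlinarith
        calc i * q ^ 3 + j + k * q + m * (q ^ 2 + 1) +
              (∑ s : Fin (q - 2), n s * ((s.1 + 2) * q ^ 2))
            ≤ i * q ^ 3 + j * q ^ 3 + k * q ^ 3 + m * q * q ^ 3 +
              (∑ s : Fin (q - 2), n s * ((s.1 + 2) * q - (s.1 + 1))) * q ^ 3 := by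
              gcongr <;> assumption
          _ = (i + j + k + m * q +
              ∑ s : Fin (q - 2), n s * ((s.1 + 2) * q - (s.1 + 1))) * q ^ 3 := by
              ring
      have hfin : (i + j + k + m * q +
          ∑ s : Fin (q - 2), n s * ((s.1 + 2) * q - (s.1 + 1))) * q ^ 3
          ≤ (q ^ 2 - 2) * q ^ 3 := Nat.mul_le_mul_right _ hw
      omega
  · rintro ⟨i, j, k, m, n⟩ ⟨hj, hw⟩
    simp only [gkWt] at hw
    replace hj : j ≤ q - 1 := hj
    set S := ∑ s : Fin (q - 2), n s * ((s.1 + 2) * q - (s.1 + 1)) with hS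
    have hmq : m * q ≤ q ^ 2 - 2 := by omega
    have hm : m ≤ q - 1 := by
      have hsq : q ^ 2 = q * q := sq q
      have h1 : m * q < q * q := by omega
      have := Nat.lt_of_mul_lt_mul_right h1
      omega
    refine ⟨show i ≤ q ^ 2 - 2 by omega, show k ≤ q ^ 2 - 2 by omega, hm, fun s => ?_⟩
    have hSle : S ≤ q ^ 2 - 2 := by omega
    have hns0 : n s * ((s.1 + 2) * q - (s.1 + 1)) ≤ S := by
      rw [hS]
      exact Finset.single_le_sum
        (f := fun s : Fin (q - 2) => n s * ((s.1 + 2) * q - (s.1 + 1)))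
        (fun _ _ => Nat.zero_le _) (Finset.mem_univ s)
    have hns : n s * ((s.1 + 2) * q - (s.1 + 1)) ≤ q ^ 2 - 2 := hns0.trans hSle
    rw [Nat.le_div_iff_mul_le (by omega)]
    by_contra hc
    push_neg at hc
    replace hc : q + 1 < n s * (s.1 + 2) := hc
    obtain ⟨r, rfl⟩ : ∃ r, q = r + 1 := ⟨q - 1, by omega⟩
    have hr : 1 ≤ r := by omega
    have hD : (s.1 + 2) * (r + 1) - (s.1 + 1) = (s.1 + 2) * r + 1 := by
      have : (s.1 + 2) * (r + 1) = (s.1 + 2) * r + (s.1 + 2) := by ring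
      omega
    rw [hD] at hns
    rw [show (r + 1) ^ 2 = r * r + 2 * r + 1 from by ring] at hns
    have hexp : n s * ((s.1 + 2) * r + 1) = n s * (s.1 + 2) * r + n s := by ring
    have hge : (r + 3) * r ≤ n s * (s.1 + 2) * r := Nat.mul_le_mul_right _ (by omega)
    have h3 : (r + 3) * r = r * r + 3 * r := by ring
    omega
end

section
/- Every integer a with 1 ≤ a ≤ q^3 − 2 belongs to G, while q^3 − 1 ∉ G and q^3 ∉ G; consequently the smallest positive element of ℕ \ G is q^3 − 1. -/

private lemma not_gap (q : ℕ) (hq2 : 2 ≤ q) (e : ℕ) (he1 : 1 ≤ e) (he2 : e ≤ 2)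
    (t : GKTup q) (ht : t ∈ gkCalG q) : gkPhi q t + e ≠ q ^ 3 + 1 := by
  obtain ⟨i, j, k, m, n⟩ := t
  obtain ⟨hj0, hw⟩ := ht
  have hj : j ≤ q - 1 := hj0
  intro hphi
  simp only [gkPhi] at hphi
  simp only [gkWt] at hw
  have h4 : 4 ≤ q ^ 2 := by calc (4:ℕ) = 2 ^ 2 := by norm_num
                              _ ≤ q ^ 2 := Nat.pow_le_pow_left hq2 2
  obtain ⟨S, hSdef⟩ : ∃ S, (∑ s : Fin (q - 2), n s * ((s.1 + 2) * q - (s.1 + 1))) = S := ⟨_, rfl⟩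
  obtain ⟨N, hNdef⟩ : ∃ N, (∑ s : Fin (q - 2), n s * (s.1 + 2)) = N := ⟨_, rfl⟩
  obtain ⟨M, hMdef⟩ : ∃ M, (∑ s : Fin (q - 2), n s * (s.1 + 1)) = M := ⟨_, rfl⟩
  obtain ⟨T, hTdef⟩ : ∃ T, (∑ s : Fin (q - 2), n s) = T := ⟨_, rfl⟩
  rw [hSdef] at hw
  have hP : (∑ s : Fin (q - 2), n s * ((s.1 + 2) * q ^ 2)) = N * q ^ 2 := by
    rw [← hNdef, Finset.sum_mul]
    exact Finset.sum_congr rfl (fun s _ => by ring)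
  have hS : S + M = N * q := by
    rw [← hSdef, ← hMdef, ← hNdef, ← Finset.sum_add_distrib, Finset.sum_mul]
    refine Finset.sum_congr rfl (fun s _ => ?_)
    have hle : s.1 + 1 ≤ (s.1 + 2) * q := by
      calc s.1 + 1 ≤ (s.1 + 2) * 1 := by omega
        _ ≤ (s.1 + 2) * q := Nat.mul_le_mul_left _ (by omega)
    rw [← Nat.left_distrib, Nat.sub_add_cancel hle]; ring
  have hNMT : N = M + T := by
    rw [← hNdef, ← hMdef, ← hTdef, ← Finset.sum_add_distrib]
    exact Finset.sum_congr rfl (fun s _ => by ring)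
  have hMT : M ≤ (q - 2) * T := by
    rw [← hMdef, ← hTdef, Finset.mul_sum]
    refine Finset.sum_le_sum (fun s _ => ?_)
    have hs := s.2
    calc n s * (s.1 + 1) ≤ n s * (q - 2) := Nat.mul_le_mul_left _ (by omega)
      _ = (q - 2) * n s := Nat.mul_comm _ _
  rw [hP] at hphi
  rw [Nat.le_sub_iff_add_le (by omega : 2 ≤ q ^ 2)] at hw
  have hmexp : m * (q ^ 2 + 1) = m * q ^ 2 + m := by ring
  rw [hmexp] at hphi
  -- step i = 0
  have hi : i = 0 := by
    by_contra hi0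
    have h5 : q ^ 3 ≤ i * q ^ 3 := Nat.le_mul_of_pos_left _ (by omega)
    omega
  subst hi
  rw [zero_mul, zero_add] at hphi
  have hexp1 : (k + (m + N) * q) * q = k * q + m * q ^ 2 + N * q ^ 2 := by ring
  have E' : j + m + e + (k + (m + N) * q) * q = q ^ 3 := by omega
  have hexp2 : (m + N) * q ^ 2 = m * q ^ 2 + N * q ^ 2 := by ring
  have hexp3 : q ^ 3 = q * q ^ 2 := by ring
  have hc : m + N < q := by
    have h8 : (m + N) * q ^ 2 < q * q ^ 2 := by omega
    exact lt_of_mul_lt_mul_right h8 (Nat.zero_le _)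
  have hdvd : q ∣ j + m + e := by
    rw [Nat.eq_sub_of_add_eq E']
    exact Nat.dvd_sub (dvd_pow_self q (by norm_num)) (dvd_mul_left q _)
  obtain ⟨d, hd⟩ := hdvd
  have hm : m ≤ q - 1 := by omega
  have hd1 : 1 ≤ d := by
    rcases Nat.eq_zero_or_pos d with rfl | h
    · omega
    · exact h
  have hd2 : d ≤ 2 := by
    have h9 : q * d ≤ q * 2 := by omega
    exact Nat.le_of_mul_le_mul_left h9 (by omega)
  have K : d + k + (m + N) * q = q ^ 2 := by
    have hK : q * (d + k + (m + N) * q) = q * q ^ 2 := by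
      calc q * (d + k + (m + N) * q) = q * d + (k + (m + N) * q) * q := by ring
        _ = j + m + e + (k + (m + N) * q) * q := by rw [hd]
        _ = q ^ 3 := E'
        _ = q * q ^ 2 := by ring
    exact Nat.eq_of_mul_eq_mul_left (by omega) hK
  have hexp4 : (m + N) * q = m * q + N * q := by ring
  have hMd : j + 2 ≤ M + d := by omega
  have hdd : d = 1 ∨ d = 2 := by omega
  clear hphi E' K hS hP hw hexp1 hexp2 hexp3 hexp4 hmexp hSdef hMdef hNdef hTdef hj0
  rcases hdd with rfl | rfl
  · -- d = 1 : j + m + e = q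
    have hT0 : T = 0 := by omega
    rw [hT0, Nat.mul_zero] at hMT
    omega
  · -- d = 2
    omega

private lemma zbnd1 (q j c1 c2 : ℤ) (hq : 2 ≤ q) (hj : 0 ≤ j) (h1 : 0 ≤ c1)
    (h2 : 0 ≤ c2) (h0 : j + c2 ≤ q - 1) (h1' : c1 ≤ q - 1) (h2' : c2 ≤ q - 1)
    (hb : c2 * q ^ 2 + c1 * q + (j + c2) + 3 ≤ q ^ 3) :
    j + c1 + c2 * q + 2 ≤ q ^ 2 := by
  rcases lt_or_ge c2 (q - 1) with h | h
  · nlinarith [mul_le_mul_of_nonneg_right (by linarith : c2 ≤ q - 2) (by linarith : (0:ℤ) ≤ q)]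
  · have hc2 : c2 = q - 1 := le_antisymm h2' h
    subst hc2
    have hj0 : j = 0 := by linarith
    subst hj0
    by_contra hcon
    push_neg at hcon
    have hc1 : q - 1 ≤ c1 := by nlinarith
    nlinarith [mul_le_mul_of_nonneg_right hc1 (by linarith : (0:ℤ) ≤ q)]

private lemma zbnd2 (q c0 c1 u : ℤ) (hq : 2 ≤ q) (h0 : 0 ≤ c0) (h1 : 0 ≤ c1) (hu : 0 ≤ u)
    (hc0 : c0 ≤ u + 1) (h1' : c1 ≤ q - 1) (hu' : u + 2 ≤ q - 1)
    (hb : (u + 2) * q ^ 2 + c1 * q + c0 + 3 ≤ q ^ 3) :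
    c0 + c1 + (u + 2) * q + 1 ≤ q ^ 2 + u := by
  rcases lt_or_ge (u + 2) (q - 1) with h | h
  · nlinarith [mul_le_mul_of_nonneg_right (by linarith : u + 3 ≤ q - 1) (by linarith : (0:ℤ) ≤ q)]
  · have hu2 : u = q - 3 := by linarith
    subst hu2
    rcases lt_or_ge c1 (q - 1) with hc | hc
    · nlinarith
    · have hc1 : c1 = q - 1 := le_antisymm h1' hc
      subst hc1
      nlinarith

private lemma sum_indicator {n : ℕ} (s0 : Fin n) (g : Fin n → ℕ) :
    (∑ s : Fin n, (if s = s0 then 1 else 0) * g s) = g s0 := by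
  rw [Finset.sum_eq_single s0] <;> simp +contextual

private lemma nhelp1 (A Y : ℕ) (key : A + 2 ≤ Y) : A ≤ Y - 2 := by omega

private lemma nhelp2 (c0 c1 u X Y : ℕ) (h1 : u + 1 ≤ X)
    (key : c0 + c1 + X + 1 ≤ Y + u) : c0 + c1 + (X - (u + 1)) ≤ Y - 2 := by omega

private lemma mem_aux (q : ℕ) (hq2 : 2 ≤ q) (a : ℕ) (ha1 : 1 ≤ a) (ha2 : a ≤ q ^ 3 - 2) :
    a ∈ gkG q := by
  have h8 : 8 ≤ q ^ 3 := by calc (8:ℕ) = 2 ^ 3 := by norm_num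
                              _ ≤ q ^ 3 := Nat.pow_le_pow_left hq2 3
  have h4 : 4 ≤ q ^ 2 := by calc (4:ℕ) = 2 ^ 2 := by norm_num
                              _ ≤ q ^ 2 := Nat.pow_le_pow_left hq2 2
  obtain ⟨b, rfl⟩ : ∃ b, a = b + 1 := ⟨a - 1, by omega⟩
  have hb3 : b + 3 ≤ q ^ 3 := by omega
  obtain ⟨c2, r, hd1, hr, h2⟩ : ∃ c2 r, q ^ 2 * c2 + r = b ∧ r < q ^ 2 ∧ c2 < q := by
    refine ⟨b / q ^ 2, b % q ^ 2, Nat.div_add_mod _ _, Nat.mod_lt _ (by omega), ?_⟩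
    apply Nat.div_lt_of_lt_mul
    calc b < q ^ 3 := by omega
      _ = q ^ 2 * q := by ring
  obtain ⟨c1, c0, hd2, h0, h1⟩ : ∃ c1 c0, q * c1 + c0 = r ∧ c0 < q ∧ c1 < q := by
    refine ⟨r / q, r % q, Nat.div_add_mod _ _, Nat.mod_lt _ (by omega), ?_⟩
    apply Nat.div_lt_of_lt_mul
    calc r < q ^ 2 := hr
      _ = q * q := by ring
  subst hd2
  subst hd1
  -- b = q^2*c2 + (q*c1 + c0)
  rcases le_or_gt c2 c0 with hc | hc
  · -- case 1 : c2 ≤ c0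
    obtain ⟨j, rfl⟩ : ∃ j, c0 = j + c2 := ⟨c0 - c2, by omega⟩
    refine ⟨(0, j, c1, c2, fun _ => 0), ⟨by simpa using (by omega : j ≤ q - 1), ?_⟩, ?_⟩
    · show (0:ℕ) + j + c1 + c2 * q + _ ≤ q ^ 2 - 2
      simp only [zero_mul, Finset.sum_const_zero, zero_add, add_zero]
      refine nhelp1 _ _ ?_
      have hbz : (c2 : ℤ) * q ^ 2 + c1 * q + (j + c2) + 3 ≤ q ^ 3 := by
        have := hb3; zify at this ⊢; linarith
      have key := zbnd1 (q : ℤ) j c1 c2 (by exact_mod_cast hq2) (by positivity)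
        (by positivity) (by positivity) (by push_cast; omega) (by push_cast; omega)
        (by push_cast; omega) hbz
      zify; linarith
    · show (0:ℕ) * q ^ 3 + j + c1 * q + c2 * (q ^ 2 + 1) + _ + 1 = q ^ 2 * c2 + (q * c1 + (j + c2)) + 1
      simp only [zero_mul, Finset.sum_const_zero, zero_add, add_zero]
      ring
  · rcases le_or_gt 2 c2 with hc2 | hc2
    · -- case 2 : c0 < c2, 2 ≤ c2
      obtain ⟨u, rfl⟩ : ∃ u, c2 = u + 2 := ⟨c2 - 2, by omega⟩
      have hu : u < q - 2 := by omega
      refine ⟨(0, c0, c1, 0, fun s => if s = (⟨u, hu⟩ : Fin (q - 2)) then 1 else 0),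
        ⟨by simpa using (by omega : c0 ≤ q - 1), ?_⟩, ?_⟩
      · show (0:ℕ) + c0 + c1 + 0 * q +
          (∑ s : Fin (q - 2), (if s = (⟨u, hu⟩ : Fin (q - 2)) then 1 else 0) *
            ((s.1 + 2) * q - (s.1 + 1))) ≤ q ^ 2 - 2
        rw [sum_indicator]
        simp only [zero_mul, zero_add, add_zero]
        refine nhelp2 _ _ _ _ _ ?_ ?_
        · calc u + 1 ≤ (u + 2) * 1 := by omega
            _ ≤ (u + 2) * q := Nat.mul_le_mul_left _ (by omega)
        · have hbz : ((u : ℤ) + 2) * q ^ 2 + c1 * q + c0 + 3 ≤ q ^ 3 := by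
            have := hb3; zify at this ⊢; linarith
          have key := zbnd2 (q : ℤ) c0 c1 u (by exact_mod_cast hq2) (by positivity)
            (by positivity) (by positivity) (by push_cast; omega) (by push_cast; omega)
            (by push_cast; omega) hbz
          zify; linarith
      · show (0:ℕ) * q ^ 3 + c0 + c1 * q + 0 * (q ^ 2 + 1) +
          (∑ s : Fin (q - 2), (if s = (⟨u, hu⟩ : Fin (q - 2)) then 1 else 0) *
            ((s.1 + 2) * q ^ 2)) + 1 = q ^ 2 * (u + 2) + (q * c1 + c0) + 1
        rw [sum_indicator]
        simp only [zero_mul, zero_add, add_zero]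
        ring
    · -- c0 < c2 < 2, so c2 = 1, c0 = 0
      have hc21 : c2 = 1 := by omega
      have hc00 : c0 = 0 := by omega
      subst hc21; subst hc00
      rcases Nat.eq_zero_or_pos c1 with rfl | hc1
      · -- b = q^2 : take k = q
        refine ⟨(0, 0, q, 0, fun _ => 0), ⟨by simp, ?_⟩, ?_⟩
        · show (0:ℕ) + 0 + q + 0 * q + _ ≤ q ^ 2 - 2
          simp only [zero_mul, Finset.sum_const_zero, zero_add, add_zero]
          refine nhelp1 _ _ ?_
          calc q + 2 ≤ 2 * q := by omega
            _ ≤ q * q := Nat.mul_le_mul_right _ hq2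
            _ = q ^ 2 := by ring
        · show (0:ℕ) * q ^ 3 + 0 + q * q + 0 * (q ^ 2 + 1) + _ + 1 = q ^ 2 * 1 + (q * 0 + 0) + 1
          simp only [zero_mul, Finset.sum_const_zero, zero_add, add_zero]
          ring
      · -- c1 ≥ 1 : tuple (0, q-1, c1-1, 1, 0); needs q ≥ 3
        have hq3 : 3 ≤ q := by
          rcases Nat.lt_or_ge q 3 with h | h
          · -- q = 2 : contradiction
            interval_cases q
            · simp at hb3; omega
          · exact h
        obtain ⟨c1', rfl⟩ : ∃ c1', c1 = c1' + 1 := ⟨c1 - 1, by omega⟩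
        refine ⟨(0, q - 1, c1', 1, fun _ => 0), ⟨by simp, ?_⟩, ?_⟩
        · show (0:ℕ) + (q - 1) + c1' + 1 * q + _ ≤ q ^ 2 - 2
          simp only [zero_mul, Finset.sum_const_zero, zero_add, add_zero, one_mul]
          refine nhelp1 _ _ ?_
          have h3q : 3 * q ≤ q * q := Nat.mul_le_mul_right _ hq3
          have hqq : q * q = q ^ 2 := by ring
          omega
        · show (0:ℕ) * q ^ 3 + (q - 1) + c1' * q + 1 * (q ^ 2 + 1) + _ + 1
            = q ^ 2 * 1 + (q * (c1' + 1) + 0) + 1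
          simp only [zero_mul, Finset.sum_const_zero, zero_add, add_zero, one_mul]
          obtain ⟨p, rfl⟩ : ∃ p, q = p + 1 := ⟨q - 1, by omega⟩
          simp only [Nat.add_sub_cancel]
          ring

/-- Every integer `a` with `1 ≤ a ≤ q^3 - 2` lies in `G`, while `q^3 - 1 ∉ G` and
`q^3 ∉ G`; hence the smallest positive element of `ℕ \ G` is `q^3 - 1`. -/
theorem gk_multiplicity (q : ℕ) (hq : IsPrimePow q) :
    (∀ a : ℕ, 1 ≤ a → a ≤ q ^ 3 - 2 → a ∈ gkG q) ∧
    q ^ 3 - 1 ∉ gkG q ∧ q ^ 3 ∉ gkG q ∧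
    IsLeast {n : ℕ | 0 < n ∧ n ∉ gkG q} (q ^ 3 - 1) := by
  have hq2 : 2 ≤ q := hq.two_le
  have h8 : 8 ≤ q ^ 3 := by calc (8:ℕ) = 2 ^ 3 := by norm_num
                              _ ≤ q ^ 3 := Nat.pow_le_pow_left hq2 3
  have hn1 : q ^ 3 - 1 ∉ gkG q := by
    rintro ⟨t, ht, hphi⟩
    exact not_gap q hq2 2 (by norm_num) (by norm_num) t ht (by omega)
  have hn2 : q ^ 3 ∉ gkG q := by
    rintro ⟨t, ht, hphi⟩
    exact not_gap q hq2 1 (by norm_num) (by norm_num) t ht (by omega)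
  refine ⟨fun a ha1 ha2 => mem_aux q hq2 a ha1 ha2, hn1, hn2, ⟨by omega, hn1⟩, ?_⟩
  intro x hx
  by_contra hlt
  push_neg at hlt
  exact hx.2 (mem_aux q hq2 x hx.1 (by omega))
end

section
/- For each i with 0 ≤ i ≤ q − 1, the identity j·q^3 + i·(q^4 − q^3 − q^2 + q − 1) = (iq − jq^2)(q^3 − q + 1) + (jq^2 − i)(q^3 + 1) holds for all integers j; in particular, for 1 ≤ j ≤ q − 1 the integer (iq − jq^2 + k₁)(q^3 − q + 1) + (jq^2 − i + k₂)(q^3 + 1) with 0 ≤ k₁ ≤ q − 1 and 0 ≤ k₂ ≤ q^3 − q − jq^2 + i satisfies iq − jq^2 + k₁ < 0 and 0 ≤ jq^2 − i + k₂ ≤ q^3 − q, and hence does not lie in the numerical semigroup S generated by q^3 − q + 1 and q^3 + 1. -/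
/-- The numerical semigroup `S` generated by `q^3 - q + 1` and `q^3 + 1`. -/
def gkS (q : ℤ) : AddSubmonoid ℤ :=
  AddSubmonoid.closure {q ^ 3 - q + 1, q ^ 3 + 1}

/-- The identity `jq^3 + i(q^4-q^3-q^2+q-1) = (iq-jq^2)(q^3-q+1) + (jq^2-i)(q^3+1)` holds;
and for `1 ≤ j ≤ q-1`, `0 ≤ k₁ ≤ q-1`, `0 ≤ k₂ ≤ q^3-q-jq^2+i`, the integer
`(iq-jq^2+k₁)(q^3-q+1) + (jq^2-i+k₂)(q^3+1)` has `iq-jq^2+k₁ < 0`,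
`0 ≤ jq^2-i+k₂ ≤ q^3-q`, and does not lie in `S`. -/
theorem gk_Sij_not_in_S (q : ℤ) (hq : IsPrimePow q) (i : ℤ)
    (hi0 : 0 ≤ i) (hi1 : i ≤ q - 1) :
    (∀ j : ℤ, j * q ^ 3 + i * (q ^ 4 - q ^ 3 - q ^ 2 + q - 1)
        = (i * q - j * q ^ 2) * (q ^ 3 - q + 1) + (j * q ^ 2 - i) * (q ^ 3 + 1)) ∧
    (∀ j : ℤ, 1 ≤ j → j ≤ q - 1 → ∀ k₁ k₂ : ℤ,
      0 ≤ k₁ → k₁ ≤ q - 1 → 0 ≤ k₂ → k₂ ≤ q ^ 3 - q - j * q ^ 2 + i →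
      i * q - j * q ^ 2 + k₁ < 0 ∧
      0 ≤ j * q ^ 2 - i + k₂ ∧ j * q ^ 2 - i + k₂ ≤ q ^ 3 - q ∧
      (i * q - j * q ^ 2 + k₁) * (q ^ 3 - q + 1) + (j * q ^ 2 - i + k₂) * (q ^ 3 + 1)
        ∉ gkS q) := by
  constructor
  · intro j; ring
  · intro j hj1 hj2 k₁ k₂ hk10 hk11 hk20 hk21
    have hq2 : 2 ≤ q := by linarith
    set A := i * q - j * q ^ 2 + k₁ with hA
    set B := j * q ^ 2 - i + k₂ with hB
    have hAneg : A < 0 := by nlinarith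
    have hB0 : 0 ≤ B := by nlinarith
    have hB1 : B ≤ q ^ 3 - q := by linarith
    refine ⟨hAneg, hB0, hB1, ?_⟩
    intro hmem
    rw [gkS, AddSubmonoid.mem_closure_pair] at hmem
    obtain ⟨m, n, hmn⟩ := hmem
    simp only [nsmul_eq_mul] at hmn
    set x := q ^ 3 - q + 1 with hx
    set y := q ^ 3 + 1 with hy
    have hxpos : 0 < x := by nlinarith
    have hypos : 0 < y := by nlinarith
    have hcop : IsCoprime x y := ⟨q ^ 2, -(q ^ 2 - 1), by rw [hx, hy]; ring⟩
    have hdvd : x ∣ (B - (n : ℤ)) * y := ⟨(m : ℤ) - A, by linarith [hmn]; ⟩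
    have hdvd' : x ∣ (B - (n : ℤ)) := (hcop.dvd_of_dvd_mul_right) hdvd
    obtain ⟨t, ht⟩ := hdvd'
    have hm : (m : ℤ) = A + t * y := by
      have h2 : ((m : ℤ) - A) * x = (B - n) * y := by linarith [hmn]
      have h3 : ((m : ℤ) - A) * x = (t * y) * x := by rw [h2, ht]; ring
      have := mul_right_cancel₀ (ne_of_gt hxpos) h3
      linarith
    have hm0 : (0 : ℤ) ≤ m := Int.natCast_nonneg m
    have hn0 : (0 : ℤ) ≤ n := Int.natCast_nonneg n
    have ht1 : 1 ≤ t := by nlinarith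
    have hnB : (n : ℤ) = B - t * x := by linarith [ht]
    nlinarith
end
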